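/- arXiv:2103.02254 — 4 statements merged into one kernel-verified Lean document; each statement's English description precedes it below -/
import Mathlib

section
/- Let M ≥ 1 and N ≥ 1 be integers, α > 2/M a real number, a_{j,k} := j + ik for (j,k) ∈ ℤ_N² := {(j,k) ∈ ℤ² : |j| ≥ N, |k| ≥ N}, and let 0 < b_{j,k} ≤ |a_{j,k}|^{-α} be real numbers with ∑_{(j,k) ∈ ℤ_N²} |a_{j,k}|^{-αM} ≤ 2^{-(M+1)}. Then the series f(z) = ∑_{(j,k) ∈ ℤ_N²} (b_{j,k}/(z − a_{j,k}))^M converges locally uniformly on ℂ ∖ {a_{j,k} : (j,k) ∈ ℤ_N²} and defines a transcendental meromorphic function on ℂ whose set of poles is exactly {a_{j,k} : (j,k) ∈ ℤ_N²}, each pole having order M; every finite critical value and every finite asymptotic value of f lies in the closed disk of radius 2 centered at 0 (so f is of class B), and ∞ is not an asymptotic value of f. -/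
open Filter Topology Set Metric
open scoped ENNReal

noncomputable section

namespace Paper

/-- Riemann sphere as one-point compactification of ℂ. -/
local notation "ℂ∞" => OnePoint ℂ

open Classical in
/-- The self-map of the Riemann sphere induced by `f : ℂ → ℂ` with pole set `P`:
poles and `∞` are sent to `∞`. -/
def sphereMap (f : ℂ → ℂ) (P : Set ℂ) : ℂ∞ → ℂ∞ :=
  fun z => Option.elim' OnePoint.infty
    (fun w => if w ∈ P then OnePoint.infty else ((f w : ℂ) : ℂ∞)) z

/-- The "norm" on the Riemann sphere, valued in `ℝ≥0∞`, with `∞ ↦ ⊤`. -/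
def sphNorm : ℂ∞ → ℝ≥0∞ :=
  fun z => Option.elim' ⊤ (fun w : ℂ => (‖w‖₊ : ℝ≥0∞)) z

/-- The escaping set `I(f)` of the sphere map `F`. -/
def escapingSet (F : ℂ∞ → ℂ∞) : Set ℂ :=
  {z : ℂ | Tendsto (fun n : ℕ => F^[n] (z : ℂ∞)) atTop (𝓝 (OnePoint.infty))}

/-- The set `I_R(f) = {z : liminf |F^n(z)| ≥ R}`. -/
def escapingSetGe (F : ℂ∞ → ℂ∞) (R : ℝ) : Set ℂ :=
  {z : ℂ | ENNReal.ofReal R ≤ Filter.liminf (fun n : ℕ => sphNorm (F^[n] (z : ℂ∞))) atTop}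

/-- The finite critical values of `f`. -/
def critValues (f : ℂ → ℂ) : Set ℂ :=
  {w : ℂ | ∃ c : ℂ, AnalyticAt ℂ f c ∧ deriv f c = 0 ∧ f c = w}

/-- Asymptotic values (on the sphere) of the sphere map `F`. -/
def asymValues (F : ℂ∞ → ℂ∞) : Set ℂ∞ :=
  {w : ℂ∞ | ∃ γ : ℝ → ℂ, Continuous γ ∧ Tendsto (fun t => ‖γ t‖) atTop atTop ∧
    Tendsto (fun t => F ((γ t : ℂ) : ℂ∞)) atTop (𝓝 w)}

/-- The singular set `S(f)`: finite critical values and finite asymptotic values. -/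
def singularSet (f : ℂ → ℂ) (P : Set ℂ) : Set ℂ :=
  critValues f ∪ {w : ℂ | ((w : ℂ) : ℂ∞) ∈ asymValues (sphereMap f P)}

/-- `f` is of class `B`: bounded singular set. -/
def ClassB (f : ℂ → ℂ) (P : Set ℂ) : Prop :=
  Bornology.IsBounded (singularSet f P)

/-- `∞` is not an asymptotic value of `f`. -/
def InftyNotAsym (f : ℂ → ℂ) (P : Set ℂ) : Prop :=
  OnePoint.infty ∉ asymValues (sphereMap f P)

/-- `f` is a meromorphic function on `ℂ` whose poles are exactly the (injectively enumerated)
points `a j`, the pole `a j` having order `m j ≥ 1` and coefficient `b j ≠ 0`,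
i.e. `(z - a j) ^ (m j) * f z → (b j) ^ (m j)` as `z → a j`.  Since there are infinitely many
poles, any such `f` is transcendental. -/
structure MeroData (f : ℂ → ℂ) (a : ℕ → ℂ) (m : ℕ → ℕ) (b : ℕ → ℂ) : Prop where
  inj : Function.Injective a
  analyticOff : ∀ z ∉ Set.range a, AnalyticAt ℂ f z
  mpos : ∀ j, 1 ≤ m j
  bne : ∀ j, b j ≠ 0
  blim : ∀ j, Tendsto (fun z : ℂ => (z - a j) ^ (m j) * f z) (𝓝[≠] (a j)) (𝓝 ((b j) ^ (m j)))

/-- The critical exponent of the series `∑_j (c j) ^ t`: the infimum of the set of `t ≥ 0`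
for which the series converges (`∞` if this set is empty). -/
def critExp {ι : Type*} (c : ι → ℝ) : ℝ≥0∞ :=
  sInf (ENNReal.ofReal '' {t : ℝ | 0 ≤ t ∧ Summable (fun j : ι => c j ^ t)})

/-- The component `U_j(R)` of `f⁻¹({|w| > R})` containing the pole `p`. -/
def poleComponent (f : ℂ → ℂ) (P : Set ℂ) (R : ℝ) (p : ℂ) : Set ℂ :=
  connectedComponentIn {z : ℂ | ENNReal.ofReal R < sphNorm (sphereMap f P (z : ℂ∞))} p

/-- Points of the escaping set whose orbit eventually stays in `U ⊆ ℂ`. -/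
def escapesThrough (f : ℂ → ℂ) (P : Set ℂ) (U : Set ℂ) : Set ℂ :=
  {z ∈ escapingSet (sphereMap f P) |
    ∃ N : ℕ, 1 ≤ N ∧ ∀ n ≥ N, ∃ w ∈ U, (sphereMap f P)^[n] (z : ℂ∞) = ((w : ℂ) : ℂ∞)}

end Paper

namespace Paper

/-- Index set `ℤ_N² = {(j,k) : |j|,|k| ≥ N}`. -/
def ZN (N : ℕ) : Type := {p : ℤ × ℤ // N ≤ p.1.natAbs ∧ N ≤ p.2.natAbs}

/-- The lattice point `a_{j,k} = j + i k`. -/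
def latA {N : ℕ} (p : ZN N) : ℂ := (p.1.1 : ℂ) + (p.1.2 : ℂ) * Complex.I

/-- The set of poles `{a_{j,k}}`. -/
def latPoles (N : ℕ) : Set ℂ := Set.range (latA (N := N))

/-- The function `f(z) = ∑_{(j,k) ∈ ℤ_N²} (b_{j,k}/(z - a_{j,k}))^M`. -/
def latF (N M : ℕ) (bc : ZN N → ℝ) (z : ℂ) : ℂ :=
  ∑' p : ZN N, ((bc p : ℂ) / (z - latA p)) ^ M

end Paper


namespace Paper

theorem latA_re {N : ℕ} (p : ZN N) : (latA p).re = (p.1.1 : ℝ) := by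
  simp [latA]

theorem latA_im {N : ℕ} (p : ZN N) : (latA p).im = (p.1.2 : ℝ) := by
  simp [latA]

theorem latA_inj' {N : ℕ} : Function.Injective (latA (N := N)) := by
  intro p q h
  have h1 : (latA p).re = (latA q).re := by rw [h]
  have h2 : (latA p).im = (latA q).im := by rw [h]
  rw [latA_re, latA_re] at h1
  rw [latA_im, latA_im] at h2
  have e1 : p.1.1 = q.1.1 := by exact_mod_cast h1
  have e2 : p.1.2 = q.1.2 := by exact_mod_cast h2
  exact Subtype.ext (Prod.ext e1 e2)

instance ZN.infinite (N : ℕ) : Infinite (ZN N) := by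
  refine Infinite.of_injective
    (fun n : ℕ => (⟨((N : ℤ) + n, (N : ℤ) + n), by omega, by omega⟩ : ZN N)) ?_
  intro a b h
  have := congrArg (fun x : ZN N => x.1.1) h
  simp only at this
  omega

theorem latA_sep {N : ℕ} {p q : ZN N} (h : p ≠ q) : 1 ≤ ‖latA p - latA q‖ := by
  have hne : p.1.1 ≠ q.1.1 ∨ p.1.2 ≠ q.1.2 := by
    by_contra hc
    push_neg at hc
    exact h (Subtype.ext (Prod.ext hc.1 hc.2))
  rcases hne with hj | hk
  · have : (1 : ℝ) ≤ |(latA p - latA q).re| := by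
      rw [Complex.sub_re, latA_re, latA_re, ← Int.cast_sub, ← Int.cast_abs]
      exact_mod_cast Int.one_le_abs (sub_ne_zero.2 hj)
    calc (1:ℝ) ≤ |(latA p - latA q).re| := this
      _ ≤ ‖latA p - latA q‖ := Complex.abs_re_le_norm _
      _ = ‖latA p - latA q‖ := rfl
  · have : (1 : ℝ) ≤ |(latA p - latA q).im| := by
      rw [Complex.sub_im, latA_im, latA_im, ← Int.cast_sub, ← Int.cast_abs]
      exact_mod_cast Int.one_le_abs (sub_ne_zero.2 hk)
    calc (1:ℝ) ≤ |(latA p - latA q).im| := this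
      _ ≤ ‖latA p - latA q‖ := Complex.abs_im_le_norm _
      _ = ‖latA p - latA q‖ := rfl

theorem one_le_norm_latA {N : ℕ} (hN : 1 ≤ N) (p : ZN N) : 1 ≤ ‖latA p‖ := by
  have h1 : (1 : ℝ) ≤ |(latA p).re| := by
    rw [latA_re, ← Int.cast_abs]
    have : (1 : ℤ) ≤ |p.1.1| := by rw [Int.abs_eq_natAbs]; have := p.2.1; omega
    exact_mod_cast this
  calc (1:ℝ) ≤ |(latA p).re| := h1
    _ ≤ ‖latA p‖ := Complex.abs_re_le_norm _
    _ = ‖latA p‖ := rfl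

theorem latPoles_nonempty (N : ℕ) : (latPoles N).Nonempty :=
  ⟨latA ⟨((N:ℤ), (N:ℤ)), by omega, by omega⟩, Set.mem_range_self _⟩

theorem latPoles_closed (N : ℕ) : IsClosed (latPoles N) := by
  apply isClosed_of_closure_subset
  intro z hz
  obtain ⟨b, hb, hdb⟩ := Metric.mem_closure_iff.1 hz (1/2) (by norm_num)
  by_cases hzb : z = b
  · rwa [hzb]
  · exfalso
    have hpos : 0 < dist z b := dist_pos.2 hzb
    obtain ⟨b', hb', hdb'⟩ := Metric.mem_closure_iff.1 hz (min (1/2) (dist z b))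
      (lt_min (by norm_num) hpos)
    have hbne : b' ≠ b := by
      intro h
      rw [h] at hdb'
      exact absurd hdb' (not_lt.2 (min_le_right _ _))
    obtain ⟨p, rfl⟩ := hb
    obtain ⟨q, rfl⟩ := hb'
    have hpq : q ≠ p := fun h => hbne (by rw [h])
    have h1 : (1:ℝ) ≤ dist (latA q) (latA p) := by
      rw [dist_eq_norm]; exact latA_sep hpq
    have : dist (latA q) (latA p) < 1 := by
      calc dist (latA q) (latA p) ≤ dist (latA q) z + dist z (latA p) := dist_triangle _ _ _
        _ < 1/2 + 1/2 := by
            apply add_lt_add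
            · rw [dist_comm]; exact lt_of_lt_of_le hdb' (min_le_left _ _)
            · exact hdb
        _ = 1 := by norm_num
    linarith

section Est
variable {M N : ℕ} {α : ℝ} {bc : ZN N → ℝ}

theorem castM_pos (hM : 1 ≤ M) : (0:ℝ) < M := by
  exact_mod_cast Nat.pos_of_ne_zero (by omega)

theorem alpha_pos (hM : 1 ≤ M) (hα : 2/(M:ℝ) < α) : 0 < α :=
  lt_trans (div_pos two_pos (castM_pos hM)) hα

theorem bc_le_one (hM : 1 ≤ M) (hN : 1 ≤ N) (hα : 2/(M:ℝ) < α)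
    (hbc : ∀ p : ZN N, 0 < bc p ∧ bc p ≤ ‖latA p‖ ^ (-α)) (p : ZN N) : bc p ≤ 1 :=
  le_trans (hbc p).2 (Real.rpow_le_one_of_one_le_of_nonpos (one_le_norm_latA hN p)
    (neg_nonpos.2 (alpha_pos hM hα).le))

theorem bcM_le (hbc : ∀ p : ZN N, 0 < bc p ∧ bc p ≤ ‖latA p‖ ^ (-α)) (p : ZN N) :
    bc p ^ M ≤ ‖latA p‖ ^ (-(α * M)) := by
  have h1 : bc p ^ M ≤ (‖latA p‖ ^ (-α)) ^ M := pow_le_pow_left₀ (hbc p).1.le (hbc p).2 M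
  have h2 : (‖latA p‖ ^ (-α)) ^ M = ‖latA p‖ ^ (-(α * M)) := by
    rw [← Real.rpow_natCast (‖latA p‖ ^ (-α)) M, ← Real.rpow_mul (norm_nonneg _), neg_mul]
  rwa [h2] at h1

theorem summable_bcM (hbc : ∀ p : ZN N, 0 < bc p ∧ bc p ≤ ‖latA p‖ ^ (-α))
    (hsum : Summable (fun p : ZN N => ‖latA p‖ ^ (-(α * M)))) :
    Summable (fun p : ZN N => bc p ^ M) :=
  Summable.of_nonneg_of_le (fun p => pow_nonneg (hbc p).1.le M) (bcM_le hbc) hsum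

theorem tsum_bcM_le (hbc : ∀ p : ZN N, 0 < bc p ∧ bc p ≤ ‖latA p‖ ^ (-α))
    (hsum : Summable (fun p : ZN N => ‖latA p‖ ^ (-(α * M))))
    (hbound : (∑' p : ZN N, ‖latA p‖ ^ (-(α * M))) ≤ 1 / 2 ^ (M + 1)) :
    (∑' p : ZN N, bc p ^ M) ≤ 1 / 2 ^ (M + 1) :=
  le_trans (Summable.tsum_le_tsum (bcM_le hbc) (summable_bcM hbc hsum) hsum) hbound

theorem term_ofs (b a : ℂ) (M : ℕ) :
    (fun z : ℂ => (b / (z - a)) ^ M) = fun z : ℂ => b ^ M * (z - a) ^ (-(M:ℤ)) := by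
  funext z
  rw [div_pow, div_eq_mul_inv, ← zpow_natCast (z - a), ← zpow_neg]

theorem zpow_norm_le {w : ℂ} {δ : ℝ} (hδ : 0 < δ) (h : δ ≤ ‖w‖) (k : ℕ) :
    ‖w ^ (-(k:ℤ))‖ ≤ (1/δ) ^ k := by
  rw [norm_zpow, zpow_neg, zpow_natCast, one_div, inv_pow]
  exact inv_anti₀ (pow_pos hδ k) (pow_le_pow_left₀ hδ.le h k)

theorem norm_bc_coe (hbc : ∀ p : ZN N, 0 < bc p ∧ bc p ≤ ‖latA p‖ ^ (-α)) (p : ZN N) :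
    ‖((bc p : ℝ) : ℂ)‖ = bc p := by
  rw [Complex.norm_real, Real.norm_eq_abs, abs_of_pos (hbc p).1]

theorem term_norm_le (hbc : ∀ p : ZN N, 0 < bc p ∧ bc p ≤ ‖latA p‖ ^ (-α))
    {δ : ℝ} (hδ : 0 < δ) {z : ℂ} (hz : ∀ p : ZN N, δ ≤ ‖z - latA p‖) (p : ZN N) :
    ‖((bc p : ℂ) / (z - latA p)) ^ M‖ ≤ bc p ^ M * (1/δ) ^ M := by
  have he := congrFun (term_ofs (bc p : ℂ) (latA p) M) z
  rw [he, norm_mul, norm_pow, norm_bc_coe hbc]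
  exact mul_le_mul_of_nonneg_left (zpow_norm_le hδ (hz p) M)
    (pow_nonneg (hbc p).1.le M)

theorem summable_term (hbc : ∀ p : ZN N, 0 < bc p ∧ bc p ≤ ‖latA p‖ ^ (-α))
    (hsum : Summable (fun p : ZN N => ‖latA p‖ ^ (-(α * M))))
    {δ : ℝ} (hδ : 0 < δ) {z : ℂ} (hz : ∀ p : ZN N, δ ≤ ‖z - latA p‖) :
    Summable (fun p : ZN N => ((bc p : ℂ) / (z - latA p)) ^ M) :=
  Summable.of_norm_bounded ((summable_bcM hbc hsum).mul_right ((1/δ)^M))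
    (term_norm_le hbc hδ hz)

theorem sep_of_notMem {z : ℂ} (hz : z ∉ latPoles N) :
    ∃ δ : ℝ, 0 < δ ∧ ∀ p : ZN N, δ ≤ ‖z - latA p‖ := by
  refine ⟨infDist z (latPoles N),
    ((latPoles_closed N).notMem_iff_infDist_pos (latPoles_nonempty N)).1 hz, fun p => ?_⟩
  rw [← dist_eq_norm]
  exact infDist_le_dist_of_mem (Set.mem_range_self p)

theorem latF_norm_le (hbc : ∀ p : ZN N, 0 < bc p ∧ bc p ≤ ‖latA p‖ ^ (-α))
    (hsum : Summable (fun p : ZN N => ‖latA p‖ ^ (-(α * M))))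
    (hbound : (∑' p : ZN N, ‖latA p‖ ^ (-(α * M))) ≤ 1 / 2 ^ (M + 1))
    {z : ℂ} (hz : ∀ p : ZN N, (1:ℝ)/2 ≤ ‖z - latA p‖) : ‖latF N M bc z‖ ≤ 1/2 := by
  have hδ : (0:ℝ) < 1/2 := by norm_num
  have hsn : Summable (fun p : ZN N => ‖((bc p : ℂ) / (z - latA p)) ^ M‖) :=
    Summable.of_nonneg_of_le (fun p => norm_nonneg _) (term_norm_le hbc hδ hz)
      ((summable_bcM hbc hsum).mul_right _)
  calc ‖latF N M bc z‖ ≤ ∑' p : ZN N, ‖((bc p : ℂ) / (z - latA p)) ^ M‖ :=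
        norm_tsum_le_tsum_norm hsn
    _ ≤ ∑' p : ZN N, bc p ^ M * (1/(1/2):ℝ) ^ M :=
        Summable.tsum_le_tsum (term_norm_le hbc hδ hz) hsn ((summable_bcM hbc hsum).mul_right _)
    _ = (∑' p : ZN N, bc p ^ M) * (1/(1/2):ℝ) ^ M := tsum_mul_right
    _ ≤ (1 / 2 ^ (M+1)) * (1/(1/2):ℝ) ^ M := by
        apply mul_le_mul_of_nonneg_right (tsum_bcM_le hbc hsum hbound)
        positivity
    _ = 1/2 := by
        rw [show ((1:ℝ)/(1/2)) = 2 by norm_num, pow_succ]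
        field_simp

end Est

open Classical in
/-- The terms of the series other than the one belonging to the pole `p`. -/
def gterm (N M : ℕ) (bc : ZN N → ℝ) (p q : ZN N) (z : ℂ) : ℂ :=
  if q = p then 0 else ((bc q : ℂ)) ^ M * (z - latA q) ^ (-(M:ℤ))

section Pole
variable {M N : ℕ} {α : ℝ} {bc : ZN N → ℝ} {p : ZN N}

theorem other_pole_far {q : ZN N} (hq : q ≠ p) {z : ℂ}
    (hz : z ∈ ball (latA p) (1/2)) : 1/2 ≤ ‖z - latA q‖ := by
  have h1 : (1:ℝ) ≤ ‖latA p - latA q‖ := latA_sep (fun h => hq h.symm)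
  have h2 : ‖latA p - latA q‖ ≤ ‖latA p - z‖ + ‖z - latA q‖ := by
    simpa using norm_sub_le_norm_sub_add_norm_sub (latA p) z (latA q)
  have h3 : ‖latA p - z‖ < 1/2 := by
    rw [norm_sub_rev, ← dist_eq_norm]; exact mem_ball.1 hz
  linarith

theorem mem_ball_ne_pole {z : ℂ} (hz : z ∈ ball (latA p) (1/2)) (hza : z ≠ latA p) :
    z ∉ latPoles N := by
  rintro ⟨q, rfl⟩
  by_cases hq : q = p
  · exact hza (by rw [hq])
  · have := other_pole_far hq hz
    simp at this
    linarith

theorem gterm_norm_le (hbc : ∀ p : ZN N, 0 < bc p ∧ bc p ≤ ‖latA p‖ ^ (-α))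
    (q : ZN N) (z : ℂ) (hz : z ∈ ball (latA p) (1/2)) :
    ‖gterm N M bc p q z‖ ≤ bc q ^ M * 2 ^ M := by
  unfold gterm
  split
  · simp only [norm_zero]
    exact mul_nonneg (pow_nonneg (hbc q).1.le M) (by positivity)
  · rename_i hq
    rw [norm_mul, norm_pow, norm_bc_coe hbc]
    calc bc q ^ M * ‖(z - latA q) ^ (-(M:ℤ))‖ ≤ bc q ^ M * (1/(1/2):ℝ) ^ M := by
          apply mul_le_mul_of_nonneg_left
            (zpow_norm_le (by norm_num) (other_pole_far hq hz) M)
            (pow_nonneg (hbc q).1.le M)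
      _ = bc q ^ M * 2 ^ M := by norm_num

theorem gterm_diffOn (q : ZN N) :
    DifferentiableOn ℂ (gterm N M bc p q) (ball (latA p) (1/2)) := by
  unfold gterm
  split
  · exact differentiableOn_const 0
  · rename_i hq
    intro z hz
    have hne : z ≠ latA q := by
      intro h
      have := other_pole_far hq hz
      rw [h] at this
      simp at this
      linarith
    exact (((differentiableAt_id.sub_const (latA q)).zpow
      (Or.inl (sub_ne_zero.2 hne))).const_mul _).differentiableWithinAt

theorem pole_term_hasDerivAt (b aq : ℂ) (M : ℕ) {z : ℂ} (hz : z ≠ aq) :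
    HasDerivAt (fun w : ℂ => b ^ M * (w - aq) ^ (-(M:ℤ)))
      (b ^ M * (((-(M:ℤ)) : ℂ) * (z - aq) ^ (-(M:ℤ) - 1))) z := by
  have h1 : HasDerivAt (fun w : ℂ => w ^ (-(M:ℤ)))
      (((-(M:ℤ)) : ℂ) * (z - aq) ^ (-(M:ℤ) - 1)) (z - aq) := by
    simpa using hasDerivAt_zpow (-(M:ℤ)) (z - aq) (Or.inl (sub_ne_zero.2 hz))
  have h2 : HasDerivAt (fun w : ℂ => w - aq) 1 z := (hasDerivAt_id z).sub_const aq
  have h3 := (h1.comp z h2).const_mul (b ^ M)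
  simpa using h3

theorem latF_decomp (hbc : ∀ p : ZN N, 0 < bc p ∧ bc p ≤ ‖latA p‖ ^ (-α))
    (hsum : Summable (fun p : ZN N => ‖latA p‖ ^ (-(α * M))))
    {z : ℂ} (hz : z ∈ ball (latA p) (1/2)) (hza : z ≠ latA p) :
    latF N M bc z = (bc p : ℂ) ^ M * (z - latA p) ^ (-(M:ℤ))
      + ∑' q : ZN N, gterm N M bc p q z := by
  classical
  have hzP : z ∉ latPoles N := mem_ball_ne_pole hz hza
  obtain ⟨δ, hδ, hsep⟩ := sep_of_notMem hzP
  have hsummable : Summable (fun q : ZN N => ((bc q : ℂ) / (z - latA q)) ^ M) :=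
    summable_term hbc hsum hδ hsep
  have h0 : latF N M bc z = ∑' q : ZN N, (bc q : ℂ) ^ M * (z - latA q) ^ (-(M:ℤ)) :=
    tsum_congr (fun q => congrFun (term_ofs _ _ M) z)
  have hsum2 : Summable (fun q : ZN N => (bc q : ℂ) ^ M * (z - latA q) ^ (-(M:ℤ))) :=
    hsummable.congr (fun q => congrFun (term_ofs _ _ M) z)
  rw [h0, Summable.tsum_eq_add_tsum_ite hsum2 p]
  rfl

theorem latG_norm_le (hbc : ∀ p : ZN N, 0 < bc p ∧ bc p ≤ ‖latA p‖ ^ (-α))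
    (hsum : Summable (fun p : ZN N => ‖latA p‖ ^ (-(α * M))))
    (hbound : (∑' p : ZN N, ‖latA p‖ ^ (-(α * M))) ≤ 1 / 2 ^ (M + 1))
    {z : ℂ} (hz : z ∈ ball (latA p) (1/2)) :
    ‖∑' q : ZN N, gterm N M bc p q z‖ ≤ 1/2 := by
  have hu : Summable (fun q : ZN N => bc q ^ M * 2 ^ M) :=
    (summable_bcM hbc hsum).mul_right _
  have hsn : Summable (fun q : ZN N => ‖gterm N M bc p q z‖) :=
    Summable.of_nonneg_of_le (fun q => norm_nonneg _)
      (fun q => gterm_norm_le hbc q z hz) hu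
  calc ‖∑' q : ZN N, gterm N M bc p q z‖ ≤ ∑' q : ZN N, ‖gterm N M bc p q z‖ :=
        norm_tsum_le_tsum_norm hsn
    _ ≤ ∑' q : ZN N, bc q ^ M * 2 ^ M :=
        Summable.tsum_le_tsum (fun q => gterm_norm_le hbc q z hz) hsn hu
    _ = (∑' q : ZN N, bc q ^ M) * 2 ^ M := tsum_mul_right
    _ ≤ (1 / 2 ^ (M+1)) * 2 ^ M := by
        exact mul_le_mul_of_nonneg_right (tsum_bcM_le hbc hsum hbound) (by positivity)
    _ = 1/2 := by rw [pow_succ]; field_simp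

theorem latF_blim (hM : 1 ≤ M)
    (hbc : ∀ p : ZN N, 0 < bc p ∧ bc p ≤ ‖latA p‖ ^ (-α))
    (hsum : Summable (fun p : ZN N => ‖latA p‖ ^ (-(α * M))))
    (hbound : (∑' p : ZN N, ‖latA p‖ ^ (-(α * M))) ≤ 1 / 2 ^ (M + 1)) (p : ZN N) :
    Tendsto (fun z : ℂ => (z - latA p) ^ M * latF N M bc z) (𝓝[≠] latA p)
      (𝓝 ((bc p : ℂ) ^ M)) := by
  set a := latA p with ha
  have hev : (fun z : ℂ => (z - a) ^ M * latF N M bc z) =ᶠ[𝓝[≠] a]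
      (fun z : ℂ => (bc p : ℂ) ^ M + (z - a) ^ M * ∑' q : ZN N, gterm N M bc p q z) := by
    filter_upwards [mem_nhdsWithin_of_mem_nhds (ball_mem_nhds a (by norm_num : (0:ℝ) < 1/2)),
      self_mem_nhdsWithin] with z hz hz'
    have hz' : z ≠ a := hz'
    rw [latF_decomp hbc hsum hz hz', mul_add]
    congr 1
    rw [mul_comm ((bc p : ℂ) ^ M) _, ← mul_assoc, ← zpow_natCast (z - a) M, ← zpow_add₀
      (sub_ne_zero.2 hz'), add_neg_cancel, zpow_zero, one_mul]
  have h2 : Tendsto (fun z : ℂ => (z - a) ^ M * ∑' q : ZN N, gterm N M bc p q z)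
      (𝓝[≠] a) (𝓝 0) := by
    have hb1 : ∀ᶠ z in 𝓝[≠] a, ‖(z - a) ^ M * ∑' q : ZN N, gterm N M bc p q z‖
        ≤ ‖z - a‖ ^ M * (1/2) := by
      filter_upwards [mem_nhdsWithin_of_mem_nhds (ball_mem_nhds a (by norm_num : (0:ℝ) < 1/2))]
        with z hz
      rw [norm_mul, norm_pow]
      exact mul_le_mul_of_nonneg_left (latG_norm_le hbc hsum hbound hz)
        (pow_nonneg (norm_nonneg _) M)
    refine squeeze_zero_norm' hb1 ?_
    have hcont : Tendsto (fun z : ℂ => ‖z - a‖ ^ M * (1/2)) (𝓝 a)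
          (𝓝 (‖a - a‖ ^ M * (1/2))) :=
      (((continuous_id.sub continuous_const).norm.pow M).mul continuous_const).tendsto a
    rw [sub_self, norm_zero, zero_pow (by omega : M ≠ 0), zero_mul] at hcont
    exact hcont.mono_left nhdsWithin_le_nhds
  have h3 := h2.const_add ((bc p : ℂ) ^ M)
  rw [add_zero] at h3
  exact h3.congr' hev.symm

theorem latF_crit_le (hM : 1 ≤ M) (hN : 1 ≤ N) (hα : 2/(M:ℝ) < α)
    (hbc : ∀ p : ZN N, 0 < bc p ∧ bc p ≤ ‖latA p‖ ^ (-α))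
    (hsum : Summable (fun p : ZN N => ‖latA p‖ ^ (-(α * M))))
    (hbound : (∑' p : ZN N, ‖latA p‖ ^ (-(α * M))) ≤ 1 / 2 ^ (M + 1)) {c : ℂ}
    (han : AnalyticAt ℂ (latF N M bc) c) (hd : deriv (latF N M bc) c = 0) :
    ‖latF N M bc c‖ ≤ 2 := by
  by_cases hfar : ∀ p : ZN N, (1:ℝ)/2 ≤ ‖c - latA p‖
  · linarith [latF_norm_le hbc hsum hbound hfar]
  push_neg at hfar
  obtain ⟨p, hp⟩ := hfar
  have hcb : c ∈ ball (latA p) (1/2) := by rw [mem_ball, dist_eq_norm]; exact hp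
  have hca : c ≠ latA p := by
    intro hrfl
    have h1 : Tendsto (fun z : ℂ => (z - latA p) ^ M * latF N M bc z) (𝓝[≠] latA p)
        (𝓝 ((latA p - latA p) ^ M * latF N M bc (latA p))) := by
      refine Tendsto.mono_left ?_ nhdsWithin_le_nhds
      have hanc : ContinuousAt (latF N M bc) (latA p) := hrfl ▸ han.continuousAt
      exact (((continuous_id.sub continuous_const).pow M).continuousAt).mul hanc
    rw [sub_self, zero_pow (by omega : M ≠ 0), zero_mul] at h1
    have h2 := latF_blim hM hbc hsum hbound p
    have h3 := tendsto_nhds_unique h1 h2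
    exact pow_ne_zero M (by exact_mod_cast (hbc p).1.ne' : (bc p : ℂ) ≠ 0) h3.symm
  set a := latA p with ha
  set U := ball a (1/2) with hUdef
  have hU : IsOpen U := isOpen_ball
  set G := fun w : ℂ => ∑' q : ZN N, gterm N M bc p q w with hGdef
  have hu : Summable (fun q : ZN N => bc q ^ M * 2 ^ M) := (summable_bcM hbc hsum).mul_right _
  have hdiffq : ∀ q : ZN N, DifferentiableOn ℂ (gterm N M bc p q) U := fun q => gterm_diffOn q
  have hFle : ∀ (q : ZN N) (w : ℂ), w ∈ U → ‖gterm N M bc p q w‖ ≤ bc q ^ M * 2 ^ M :=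
    fun q w hw => gterm_norm_le hbc q w hw
  have hGdiff : DifferentiableOn ℂ G U :=
    Complex.differentiableOn_tsum_of_summable_norm hu hdiffq hU hFle
  have hHasSum : HasSum (fun q : ZN N => deriv (gterm N M bc p q) c) (deriv G c) :=
    Complex.hasSum_deriv_of_summable_norm hu hdiffq hU hFle hcb
  have hM0 : (0:ℝ) < M := by exact_mod_cast Nat.pos_of_ne_zero (by omega)
  have hdg : ∀ q : ZN N, ‖deriv (gterm N M bc p q) c‖ ≤ ((M:ℝ) * 2 ^ (M+1)) * bc q ^ M := by
    intro q
    by_cases hq : q = p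
    · have hzero : gterm N M bc p q = fun _ => 0 := by funext w; simp [gterm, hq]
      rw [hzero]
      simp only [deriv_const', norm_zero]
      exact mul_nonneg (by positivity) (pow_nonneg (hbc q).1.le M)
    · have hne : c ≠ latA q := by
        intro h
        have h5 := other_pole_far hq hcb
        rw [← h] at h5
        simp at h5
        linarith
      have heq : gterm N M bc p q = fun w : ℂ => ((bc q : ℂ)) ^ M * (w - latA q) ^ (-(M:ℤ)) := by
        funext w; simp [gterm, hq]
      have hder := pole_term_hasDerivAt ((bc q : ℂ)) (latA q) M hne
      have hderiv : deriv (gterm N M bc p q) c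
          = (bc q : ℂ) ^ M * (((-(M:ℤ)) : ℂ) * (c - latA q) ^ (-(M:ℤ) - 1)) := by
        rw [heq]; exact hder.deriv
      rw [hderiv, norm_mul, norm_mul, norm_pow, norm_bc_coe hbc]
      have hnm : ‖((-(M:ℤ)) : ℂ)‖ = (M:ℝ) := by simp
      have hzp : ‖(c - latA q) ^ (-(M:ℤ) - 1)‖ ≤ (2:ℝ) ^ (M+1) := by
        have hcast : (-(M:ℤ) - 1) = -(((M+1:ℕ)):ℤ) := by push_cast; ring
        rw [hcast]
        have := zpow_norm_le (by norm_num : (0:ℝ) < 1/2) (other_pole_far hq hcb) (M+1)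
        calc ‖(c - latA q) ^ (-((M+1:ℕ):ℤ))‖ ≤ ((1:ℝ)/(1/2)) ^ (M+1) := this
          _ = (2:ℝ) ^ (M+1) := by norm_num
      rw [hnm]
      calc bc q ^ M * ((M:ℝ) * ‖(c - latA q) ^ (-(M:ℤ) - 1)‖)
          ≤ bc q ^ M * ((M:ℝ) * 2 ^ (M+1)) := by
            apply mul_le_mul_of_nonneg_left _ (pow_nonneg (hbc q).1.le M)
            exact mul_le_mul_of_nonneg_left hzp (by positivity)
        _ = ((M:ℝ) * 2 ^ (M+1)) * bc q ^ M := by ring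
  have hsnd : Summable (fun q : ZN N => ‖deriv (gterm N M bc p q) c‖) :=
    Summable.of_nonneg_of_le (fun q => norm_nonneg _) hdg
      ((summable_bcM hbc hsum).mul_left _)
  have hGderiv_le : ‖deriv G c‖ ≤ (M:ℝ) := by
    have h1 : deriv G c = ∑' q : ZN N, deriv (gterm N M bc p q) c := hHasSum.tsum_eq.symm
    calc ‖deriv G c‖ = ‖∑' q : ZN N, deriv (gterm N M bc p q) c‖ := by rw [h1]
      _ ≤ ∑' q : ZN N, ‖deriv (gterm N M bc p q) c‖ := norm_tsum_le_tsum_norm hsnd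
      _ ≤ ∑' q : ZN N, ((M:ℝ) * 2 ^ (M+1)) * bc q ^ M :=
          Summable.tsum_le_tsum hdg hsnd ((summable_bcM hbc hsum).mul_left _)
      _ = ((M:ℝ) * 2 ^ (M+1)) * ∑' q : ZN N, bc q ^ M := tsum_mul_left
      _ ≤ ((M:ℝ) * 2 ^ (M+1)) * (1 / 2 ^ (M+1)) := by
          apply mul_le_mul_of_nonneg_left (tsum_bcM_le hbc hsum hbound) (by positivity)
      _ = (M:ℝ) := by field_simp
  have hT : HasDerivAt (fun w : ℂ => (bc p : ℂ) ^ M * (w - a) ^ (-(M:ℤ)))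
      ((bc p : ℂ) ^ M * (((-(M:ℤ)) : ℂ) * (c - a) ^ (-(M:ℤ) - 1))) c :=
    pole_term_hasDerivAt _ _ M hca
  have hGd : HasDerivAt G (deriv G c) c :=
    (hGdiff.differentiableAt (hU.mem_nhds hcb)).hasDerivAt
  have hop : IsOpen (U \ {a}) := hU.sdiff isClosed_singleton
  have hev : latF N M bc =ᶠ[𝓝 c]
      fun w : ℂ => (bc p : ℂ) ^ M * (w - a) ^ (-(M:ℤ)) + G w := by
    filter_upwards [hop.mem_nhds ⟨hcb, hca⟩] with z hz
    exact latF_decomp hbc hsum hz.1 hz.2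
  have hF : HasDerivAt (latF N M bc)
      ((bc p : ℂ) ^ M * (((-(M:ℤ)) : ℂ) * (c - a) ^ (-(M:ℤ) - 1)) + deriv G c) c :=
    (hT.add hGd).congr_of_eventuallyEq hev
  have heq0 : (bc p : ℂ) ^ M * (((-(M:ℤ)) : ℂ) * (c - a) ^ (-(M:ℤ) - 1)) + deriv G c = 0 := by
    have := hF.deriv
    rw [hd] at this
    exact this.symm
  have hTnorm : ‖(bc p : ℂ) ^ M * (((-(M:ℤ)) : ℂ) * (c - a) ^ (-(M:ℤ) - 1))‖ ≤ (M:ℝ) := by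
    have h8 : (bc p : ℂ) ^ M * (((-(M:ℤ)) : ℂ) * (c - a) ^ (-(M:ℤ) - 1)) = -(deriv G c) :=
      eq_neg_of_add_eq_zero_left heq0
    rw [h8, norm_neg]
    exact hGderiv_le
  set r := ‖c - a‖ with hrdef
  have hr : 0 < r := norm_pos_iff.2 (sub_ne_zero.2 hca)
  have hkey : bc p ^ M ≤ r ^ (M+1) := by
    have hnorm : ‖(bc p : ℂ) ^ M * (((-(M:ℤ)) : ℂ) * (c - a) ^ (-(M:ℤ) - 1))‖
        = bc p ^ M * ((M:ℝ) * (r ^ (M+1))⁻¹) := by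
      rw [norm_mul, norm_mul, norm_pow, norm_bc_coe hbc]
      congr 1
      congr 1
      · simp
      · have hcast : (-(M:ℤ) - 1) = -(((M+1:ℕ)):ℤ) := by push_cast; ring
        rw [hcast, norm_zpow, zpow_neg, zpow_natCast]
    rw [hnorm] at hTnorm
    have h6 : bc p ^ M * (r ^ (M+1))⁻¹ ≤ 1 := by
      by_contra hcon
      push_neg at hcon
      have : (M:ℝ) < bc p ^ M * ((M:ℝ) * (r ^ (M+1))⁻¹) := by
        calc (M:ℝ) = 1 * (M:ℝ) := (one_mul _).symm
          _ < (bc p ^ M * (r ^ (M+1))⁻¹) * (M:ℝ) := mul_lt_mul_of_pos_right hcon hM0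
          _ = bc p ^ M * ((M:ℝ) * (r ^ (M+1))⁻¹) := by ring
      linarith
    rw [← div_eq_mul_inv, div_le_one (pow_pos hr _)] at h6
    exact h6
  have hbc1 : bc p ≤ 1 := bc_le_one hM hN hα hbc p
  have hbcr : bc p ≤ r := by
    have h7 : bc p ^ (M+1) ≤ bc p ^ M :=
      pow_le_pow_of_le_one (hbc p).1.le hbc1 (by omega)
    exact (pow_le_pow_iff_left₀ (hbc p).1.le hr.le (Nat.succ_ne_zero M)).1
      (le_trans h7 hkey)
  have hTle : ‖(bc p : ℂ) ^ M * (c - a) ^ (-(M:ℤ))‖ ≤ 1 := by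
    rw [norm_mul, norm_pow, norm_bc_coe hbc, norm_zpow, zpow_neg, zpow_natCast,
      ← div_eq_mul_inv, div_le_one (pow_pos hr _)]
    exact pow_le_pow_left₀ (hbc p).1.le hbcr M
  have hGle : ‖G c‖ ≤ 1/2 := latG_norm_le hbc hsum hbound hcb
  have hdecomp := latF_decomp hbc hsum (p := p) hcb hca
  rw [hdecomp]
  calc ‖(bc p : ℂ) ^ M * (c - a) ^ (-(M:ℤ)) + G c‖
      ≤ ‖(bc p : ℂ) ^ M * (c - a) ^ (-(M:ℤ))‖ + ‖G c‖ := norm_add_le _ _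
    _ ≤ 1 + 1/2 := add_le_add hTle hGle
    _ ≤ 2 := by norm_num

end Pole

section D
variable {M N : ℕ} {α : ℝ} {bc : ZN N → ℝ}

theorem sphereMap_coe (f : ℂ → ℂ) (P : Set ℂ) (z : ℂ) [Decidable (z ∈ P)] :
    sphereMap f P (z : OnePoint ℂ)
      = if z ∈ P then OnePoint.infty else ((f z : ℂ) : OnePoint ℂ) := by
  unfold sphereMap
  rw [show ((z : OnePoint ℂ)) = Option.some z from rfl, Option.elim'_some]
  congr

theorem latF_not_rational (hM : 1 ≤ M)
    (hbc : ∀ p : ZN N, 0 < bc p ∧ bc p ≤ ‖latA p‖ ^ (-α))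
    (hsum : Summable (fun p : ZN N => ‖latA p‖ ^ (-(α * M))))
    (hbound : (∑' p : ZN N, ‖latA p‖ ^ (-(α * M))) ≤ 1 / 2 ^ (M + 1)) :
    ¬ ∃ P Q : Polynomial ℂ, Q ≠ 0 ∧
      ∀ z : ℂ, Q.eval z ≠ 0 → latF N M bc z = P.eval z / Q.eval z := by
  rintro ⟨P, Q, hQ, hPQ⟩
  have hroots : {x : ℂ | Q.IsRoot x}.Finite := Polynomial.finite_setOf_isRoot hQ
  have hinf : (Set.range (latA (N := N))).Infinite :=
    Set.infinite_range_of_injective latA_inj'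
  have hns : ¬ (Set.range (latA (N := N)) ⊆ {x : ℂ | Q.IsRoot x}) :=
    fun h => hinf (hroots.subset h)
  obtain ⟨x, hx, hnx⟩ := Set.not_subset.1 hns
  obtain ⟨p, rfl⟩ := hx
  have hQa : Q.eval (latA p) ≠ 0 := hnx
  have hev : ∀ᶠ z in 𝓝 (latA p), Q.eval z ≠ 0 :=
    (Q.continuous.continuousAt).eventually_ne hQa
  have h2 : Tendsto (fun z : ℂ => (z - latA p) ^ M * (P.eval z / Q.eval z)) (𝓝 (latA p))
      (𝓝 ((latA p - latA p) ^ M * (P.eval (latA p) / Q.eval (latA p)))) :=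
    (((continuous_id.sub continuous_const).pow M).continuousAt).mul
      ((P.continuous.continuousAt).div (Q.continuous.continuousAt) hQa)
  rw [sub_self, zero_pow (by omega : M ≠ 0), zero_mul] at h2
  have h1 : Tendsto (fun z : ℂ => (z - latA p) ^ M * latF N M bc z) (𝓝[≠] latA p) (𝓝 0) := by
    refine (h2.mono_left nhdsWithin_le_nhds).congr' ?_
    filter_upwards [mem_nhdsWithin_of_mem_nhds hev] with z hz
    rw [hPQ z hz]
  have h3 := tendsto_nhds_unique h1 (latF_blim hM hbc hsum hbound p)
  exact pow_ne_zero M (by exact_mod_cast (hbc p).1.ne' : (bc p : ℂ) ≠ 0) h3.symm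

theorem latF_asym (hbc : ∀ p : ZN N, 0 < bc p ∧ bc p ≤ ‖latA p‖ ^ (-α))
    (hsum : Summable (fun p : ZN N => ‖latA p‖ ^ (-(α * M))))
    (hbound : (∑' p : ZN N, ‖latA p‖ ^ (-(α * M))) ≤ 1 / 2 ^ (M + 1))
    {w : OnePoint ℂ} (hw : w ∈ asymValues (sphereMap (latF N M bc) (latPoles N))) :
    w ∈ (fun z : ℂ => (z : OnePoint ℂ)) '' (closedBall 0 (1/2)) := by
  classical
  obtain ⟨γ, hgc, hginf, hgw⟩ := hw
  set S : Set (OnePoint ℂ) := (fun z : ℂ => (z : OnePoint ℂ)) '' (closedBall 0 (1/2)) with hSdef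
  have hSclosed : IsClosed S :=
    ((isCompact_closedBall 0 (1/2)).image OnePoint.continuous_coe).isClosed
  have hfreq : ∃ᶠ t in atTop, sphereMap (latF N M bc) (latPoles N) (γ t) ∈ S := by
    rw [frequently_atTop]
    intro T
    have hfar : ∃ t ≥ T, ∀ p : ZN N, (1:ℝ)/2 ≤ ‖γ t - latA p‖ := by
      by_contra hcon
      push_neg at hcon
      obtain ⟨p0, hp0⟩ := hcon T le_rfl
      have hsub : γ '' Ici T ⊆ ball (latA p0) (1/2) := by
        have hpre : IsPreconnected (γ '' Ici T) := isPreconnected_Ici.image γ hgc.continuousOn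
        have hvopen : IsOpen (⋃ q ∈ {q : ZN N | q ≠ p0}, ball (latA q) (1/2)) :=
          isOpen_biUnion fun _ _ => isOpen_ball
        have hdisj : Disjoint (ball (latA p0) (1/2))
            (⋃ q ∈ {q : ZN N | q ≠ p0}, ball (latA q) (1/2)) := by
          rw [Set.disjoint_left]
          intro x hx hx'
          simp only [Set.mem_iUnion, Set.mem_setOf_eq] at hx'
          obtain ⟨q, hq, hxq⟩ := hx'
          have h1 : (1:ℝ) ≤ ‖latA p0 - latA q‖ := latA_sep (fun h => hq h.symm)
          have h2 : dist x (latA p0) < 1/2 := mem_ball.1 hx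
          have h3 : dist x (latA q) < 1/2 := mem_ball.1 hxq
          have h4 : ‖latA p0 - latA q‖ ≤ dist x (latA p0) + dist x (latA q) := by
            rw [dist_comm x (latA p0), dist_eq_norm, dist_eq_norm]
            simpa using norm_sub_le_norm_sub_add_norm_sub (latA p0) x (latA q)
          linarith
        have hcover : γ '' Ici T ⊆ ball (latA p0) (1/2)
            ∪ ⋃ q ∈ {q : ZN N | q ≠ p0}, ball (latA q) (1/2) := by
          rintro x ⟨t, ht, rfl⟩
          obtain ⟨q, hq⟩ := hcon t ht
          have hmem : γ t ∈ ball (latA q) (1/2) := by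
            rw [mem_ball, dist_eq_norm]; exact hq
          by_cases hqp : q = p0
          · exact Or.inl (hqp ▸ hmem)
          · exact Or.inr (Set.mem_biUnion hqp hmem)
        have hne : (γ '' Ici T ∩ ball (latA p0) (1/2)).Nonempty := by
          refine ⟨γ T, ⟨T, Set.self_mem_Ici, rfl⟩, ?_⟩
          rw [mem_ball, dist_eq_norm]; exact hp0
        exact hpre.subset_left_of_subset_union isOpen_ball hvopen hdisj hcover hne
      obtain ⟨t, ht1, ht2⟩ := ((hginf.eventually_ge_atTop (‖latA p0‖ + 1)).and
        (eventually_ge_atTop T)).exists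
      have h5 : γ t ∈ ball (latA p0) (1/2) := hsub ⟨t, Set.mem_Ici.2 ht2, rfl⟩
      rw [mem_ball, dist_eq_norm] at h5
      have h6 : ‖γ t‖ ≤ ‖γ t - latA p0‖ + ‖latA p0‖ := by
        simpa using norm_add_le (γ t - latA p0) (latA p0)
      linarith
    obtain ⟨t, htT, hfar⟩ := hfar
    refine ⟨t, htT, ?_⟩
    have hnp : γ t ∉ latPoles N := by
      rintro ⟨p, hp⟩
      have := hfar p
      rw [← hp] at this
      simp at this
      linarith
    have hsm : sphereMap (latF N M bc) (latPoles N) ((γ t : ℂ) : OnePoint ℂ)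
        = ((latF N M bc (γ t) : ℂ) : OnePoint ℂ) := by
      rw [sphereMap_coe, if_neg hnp]
    rw [hsm]
    exact ⟨latF N M bc (γ t),
      mem_closedBall_zero_iff.2 (latF_norm_le hbc hsum hbound hfar), rfl⟩
  have hmem := mem_closure_of_frequently_of_tendsto hfreq hgw
  rwa [hSclosed.closure_eq] at hmem

end D

end Paper

namespace Paper

/-- **Theorem 7.1 (setup)**: under the stated conditions on `M, N, α` and the coefficients
`b_{j,k}`, the series defining `f` converges locally uniformly off the lattice points, defines a
transcendental meromorphic function whose poles are exactly the points `a_{j,k}`, each of order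
`M`; all finite critical and asymptotic values of `f` lie in the closed disk of radius `2`,
so `f ∈ B`, and `∞` is not an asymptotic value of `f`. -/
theorem lattice_example_basic (M N : ℕ) (hM : 1 ≤ M) (hN : 1 ≤ N) (α : ℝ)
    (hα : 2 / (M : ℝ) < α)
    (bc : ZN N → ℝ)
    (hbc : ∀ p : ZN N, 0 < bc p ∧ bc p ≤ ‖latA p‖ ^ (-α))
    (hsum : Summable (fun p : ZN N => ‖latA p‖ ^ (-(α * M))))
    (hbound : (∑' p : ZN N, ‖latA p‖ ^ (-(α * M))) ≤ 1 / 2 ^ (M + 1)) :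
    TendstoLocallyUniformlyOn
        (fun (s : Finset (ZN N)) (z : ℂ) => ∑ p ∈ s, ((bc p : ℂ) / (z - latA p)) ^ M)
        (latF N M bc) atTop (latPoles N)ᶜ
      ∧ (∀ z ∉ latPoles N, AnalyticAt ℂ (latF N M bc) z)
      ∧ Function.Injective (latA (N := N))
      ∧ (∀ p : ZN N,
          Tendsto (fun z : ℂ => (z - latA p) ^ M * latF N M bc z) (𝓝[≠] (latA p))
            (𝓝 ((bc p : ℂ) ^ M)))
      ∧ (¬ ∃ P Q : Polynomial ℂ, Q ≠ 0 ∧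
            ∀ z : ℂ, Q.eval z ≠ 0 → latF N M bc z = P.eval z / Q.eval z)
      ∧ singularSet (latF N M bc) (latPoles N) ⊆ Metric.closedBall 0 2
      ∧ InftyNotAsym (latF N M bc) (latPoles N) := by
  have hTLUO : TendstoLocallyUniformlyOn
      (fun (s : Finset (ZN N)) (z : ℂ) => ∑ p ∈ s, ((bc p : ℂ) / (z - latA p)) ^ M)
      (latF N M bc) atTop (latPoles N)ᶜ := by
    rw [tendstoLocallyUniformlyOn_iff_forall_isCompact (latPoles_closed N).isOpen_compl]
    intro K hK hKc
    rcases Set.eq_empty_or_nonempty K with rfl | hne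
    · exact tendstoUniformlyOn_empty
    obtain ⟨z₀, hz₀K, hmin⟩ :=
      hKc.exists_isMinOn hne (continuous_infDist_pt (latPoles N)).continuousOn
    have hδ : 0 < infDist z₀ (latPoles N) :=
      ((latPoles_closed N).notMem_iff_infDist_pos (latPoles_nonempty N)).1 (hK hz₀K)
    refine tendstoUniformlyOn_tsum
      ((summable_bcM hbc hsum).mul_right ((1/(infDist z₀ (latPoles N)))^M)) ?_
    intro p z hz
    refine term_norm_le hbc hδ (fun q => ?_) p
    calc infDist z₀ (latPoles N) ≤ infDist z (latPoles N) := hmin hz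
      _ ≤ dist z (latA q) := infDist_le_dist_of_mem (Set.mem_range_self q)
      _ = ‖z - latA q‖ := dist_eq_norm _ _
  have hdiffOn : DifferentiableOn ℂ (latF N M bc) (latPoles N)ᶜ := by
    refine hTLUO.differentiableOn (Eventually.of_forall fun s => ?_)
      (latPoles_closed N).isOpen_compl
    refine DifferentiableOn.fun_sum fun p _ => ?_
    rw [term_ofs (bc p : ℂ) (latA p) M]
    intro z hz
    have hne : z ≠ latA p := fun h => hz (h ▸ Set.mem_range_self p)
    exact (((differentiableAt_id.sub_const (latA p)).zpow
      (Or.inl (sub_ne_zero.2 hne))).const_mul _).differentiableWithinAt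
  refine ⟨hTLUO, ?_, latA_inj', fun p => latF_blim hM hbc hsum hbound p,
    latF_not_rational hM hbc hsum hbound, ?_, ?_⟩
  · intro z hz
    exact hdiffOn.analyticAt ((latPoles_closed N).isOpen_compl.mem_nhds hz)
  · intro w hw
    rcases hw with hcrit | hasym
    · obtain ⟨c, han, hd, rfl⟩ := hcrit
      exact mem_closedBall_zero_iff.2 (latF_crit_le hM hN hα hbc hsum hbound han hd)
    · obtain ⟨b, hb, hbw⟩ := latF_asym hbc hsum hbound hasym
      have hbw' : b = w := OnePoint.coe_injective hbw
      exact Metric.closedBall_subset_closedBall (by norm_num) (hbw' ▸ hb)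
  · intro h
    obtain ⟨b, hb, hbw⟩ := latF_asym hbc hsum hbound h
    exact OnePoint.coe_ne_infty b hbw


end Paper
end
end

section
/- Let M ≥ 1 and N ≥ 1 be integers, α > 2/M, a_{j,k} := j + ik for (j,k) ∈ ℤ_N² := {(j,k) ∈ ℤ² : |j| ≥ N, |k| ≥ N}, and 0 < b_{j,k} ≤ |a_{j,k}|^{-α} with ∑_{(j,k) ∈ ℤ_N²} |a_{j,k}|^{-αM} ≤ 2^{-(M+1)}. If z ∈ ℂ does not belong to any of the disks D(a_{j,k}, b_{j,k}), (j,k) ∈ ℤ_N², then |f(z)| ≤ 2, where f(z) = ∑_{(j,k) ∈ ℤ_N²} (b_{j,k}/(z − a_{j,k}))^M. -/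
open Filter Topology Set Metric
open scoped ENNReal

noncomputable section

namespace Paper

/-- Riemann sphere as one-point compactification of ℂ. -/
local notation "ℂ∞" => OnePoint ℂ

end Paper

namespace Paper

/-- **Claim 7.3**: if `z` lies outside all the disks `D(a_{j,k}, b_{j,k})`, then `|f(z)| ≤ 2`. -/
theorem lattice_bound_off_disks (M N : ℕ) (hM : 1 ≤ M) (hN : 1 ≤ N) (α : ℝ)
    (hα : 2 / (M : ℝ) < α)
    (bc : ZN N → ℝ)
    (hbc : ∀ p : ZN N, 0 < bc p ∧ bc p ≤ ‖latA p‖ ^ (-α))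
    (hsum : Summable (fun p : ZN N => ‖latA p‖ ^ (-(α * M))))
    (hbound : (∑' p : ZN N, ‖latA p‖ ^ (-(α * M))) ≤ 1 / 2 ^ (M + 1))
    (z : ℂ) (hz : ∀ p : ZN N, z ∉ Metric.ball (latA p) (bc p)) :
    ‖latF N M bc z‖ ≤ 2 := by
  classical
  set g : ZN N → ℂ := fun p => ((bc p : ℂ) / (z - latA p)) ^ M with hg
  set S : Set (ZN N) := {p | ‖z - latA p‖ < 1/2} with hS
  have hbz : ∀ p, bc p ≤ ‖z - latA p‖ := by
    intro p
    have h := hz p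
    rw [Metric.mem_ball, Complex.dist_eq] at h
    exact not_lt.mp h
  have hnorm : ∀ p, ‖g p‖ = (bc p / ‖z - latA p‖) ^ M := by
    intro p
    rw [hg]
    simp only [norm_pow, norm_div, Complex.norm_real]
    rw [Real.norm_eq_abs, abs_of_pos (hbc p).1]
  have hle1 : ∀ p, ‖g p‖ ≤ 1 := by
    intro p
    rw [hnorm]
    apply pow_le_one₀ (div_nonneg (hbc p).1.le (norm_nonneg _))
    exact div_le_one_of_le₀ (hbz p) (norm_nonneg _)
  have hfar : ∀ p ∉ S, ‖g p‖ ≤ 2 ^ M * ‖latA p‖ ^ (-(α * M)) := by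
    intro p hp
    have h2 : (1:ℝ)/2 ≤ ‖z - latA p‖ := not_lt.mp hp
    rw [hnorm]
    have h3 : bc p / ‖z - latA p‖ ≤ 2 * ‖latA p‖ ^ (-α) := by
      rw [div_le_iff₀ (by linarith)]
      calc bc p ≤ ‖latA p‖ ^ (-α) := (hbc p).2
        _ = 2 * ‖latA p‖ ^ (-α) * (1/2) := by ring
        _ ≤ 2 * ‖latA p‖ ^ (-α) * ‖z - latA p‖ := by
            apply mul_le_mul_of_nonneg_left h2
            positivity
    calc (bc p / ‖z - latA p‖) ^ M ≤ (2 * ‖latA p‖ ^ (-α)) ^ M :=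
          pow_le_pow_left₀ (div_nonneg (hbc p).1.le (norm_nonneg _)) h3 M
      _ = 2 ^ M * (‖latA p‖ ^ (-α)) ^ M := mul_pow _ _ _
      _ = 2 ^ M * ‖latA p‖ ^ (-(α * M)) := by
          congr 1
          rw [← Real.rpow_natCast (‖latA p‖ ^ (-α)) M, ← Real.rpow_mul (norm_nonneg _)]
          ring_nf
  have hsep : ∀ p q : ZN N, p ≠ q → 1 ≤ ‖latA p - latA q‖ := by
    intro p q hne
    have hd : latA p - latA q
        = ((p.1.1 - q.1.1 : ℤ) : ℝ) + ((p.1.2 - q.1.2 : ℤ) : ℝ) * Complex.I := by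
      simp only [latA]
      push_cast
      ring
    have hmn : p.1.1 - q.1.1 ≠ 0 ∨ p.1.2 - q.1.2 ≠ 0 := by
      by_contra h
      push_neg at h
      apply hne
      apply Subtype.ext
      have h1 : p.1.1 = q.1.1 := by omega
      have h2 : p.1.2 = q.1.2 := by omega
      exact Prod.ext h1 h2
    have hsq : ‖latA p - latA q‖ ^ 2
        = ((p.1.1 - q.1.1 : ℤ) : ℝ) ^ 2 + ((p.1.2 - q.1.2 : ℤ) : ℝ) ^ 2 := by
      rw [hd, Complex.sq_norm, Complex.normSq_add_mul_I]
    have h1 : (1:ℝ) ≤ ((p.1.1 - q.1.1 : ℤ) : ℝ) ^ 2 + ((p.1.2 - q.1.2 : ℤ) : ℝ) ^ 2 := by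
      rcases hmn with h | h
      · have : (1:ℤ) ≤ (p.1.1 - q.1.1) ^ 2 := by nlinarith [Int.one_le_abs h, sq_abs (p.1.1 - q.1.1)]
        have h1' : (1:ℝ) ≤ ((p.1.1 - q.1.1 : ℤ) : ℝ) ^ 2 := by exact_mod_cast this
        nlinarith [sq_nonneg ((p.1.2 - q.1.2 : ℤ) : ℝ)]
      · have : (1:ℤ) ≤ (p.1.2 - q.1.2) ^ 2 := by nlinarith [Int.one_le_abs h, sq_abs (p.1.2 - q.1.2)]
        have h1' : (1:ℝ) ≤ ((p.1.2 - q.1.2 : ℤ) : ℝ) ^ 2 := by exact_mod_cast this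
        nlinarith [sq_nonneg ((p.1.1 - q.1.1 : ℤ) : ℝ)]
    nlinarith [norm_nonneg (latA p - latA q)]
  have hSsub : S.Subsingleton := by
    intro p hp q hq
    by_contra hne
    have h1 : ‖latA p - latA q‖ < 1 := by
      calc ‖latA p - latA q‖ = ‖(latA p - z) + (z - latA q)‖ := by ring_nf
        _ ≤ ‖latA p - z‖ + ‖z - latA q‖ := norm_add_le _ _
        _ = ‖z - latA p‖ + ‖z - latA q‖ := by rw [norm_sub_rev]
        _ < 1/2 + 1/2 := add_lt_add hp hq
        _ = 1 := by norm_num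
    exact absurd (hsep p q hne) (not_le.mpr h1)
  -- the majorant
  set h : ZN N → ℝ := fun p => 2 ^ M * ‖latA p‖ ^ (-(α * M)) + S.indicator (fun _ => (1:ℝ)) p with hh
  have hSfin : S.Finite := hSsub.finite
  have hsumInd : Summable (S.indicator (fun _ => (1:ℝ))) := by
    apply summable_of_ne_finset_zero (s := hSfin.toFinset)
    intro b hb
    have hb' : b ∉ S := by simpa using hb
    simp [Set.indicator_of_notMem hb']
  have hsumh : Summable h := (hsum.mul_left _).add hsumInd
  have hgle : ∀ p, ‖g p‖ ≤ h p := by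
    intro p
    by_cases hp : p ∈ S
    · rw [hh]
      simp only [Set.indicator_of_mem hp]
      have : (0:ℝ) ≤ 2 ^ M * ‖latA p‖ ^ (-(α * M)) := by positivity
      linarith [hle1 p]
    · rw [hh]
      simp only [Set.indicator_of_notMem hp]
      linarith [hfar p hp]
  have hsumg : Summable (fun p => ‖g p‖) :=
    Summable.of_nonneg_of_le (fun p => norm_nonneg _) hgle hsumh
  have htind : (∑' p, S.indicator (fun _ => (1:ℝ)) p) ≤ 1 := by
    rcases hSsub.eq_empty_or_singleton with hE | ⟨x, hx⟩
    · rw [hE]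
      simp
    · rw [hx]
      rw [tsum_eq_single x]
      · simp
      · intro b hb
        simp [Set.indicator_of_notMem, hb]
  have hpow : (2:ℝ) ^ M * (1 / 2 ^ (M + 1)) = 1/2 := by
    rw [pow_succ]
    field_simp
  calc ‖latF N M bc z‖ = ‖∑' p, g p‖ := rfl
    _ ≤ ∑' p, ‖g p‖ := norm_tsum_le_tsum_norm hsumg
    _ ≤ ∑' p, h p := Summable.tsum_le_tsum hgle hsumg hsumh
    _ = 2 ^ M * (∑' p, ‖latA p‖ ^ (-(α * M))) + ∑' p, S.indicator (fun _ => (1:ℝ)) p := by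
        rw [hh, Summable.tsum_add (hsum.mul_left _) hsumInd, tsum_mul_left]
    _ ≤ 2 ^ M * (1 / 2 ^ (M + 1)) + 1 := by
        apply add_le_add _ htind
        apply mul_le_mul_of_nonneg_left hbound (by positivity)
    _ = 1/2 + 1 := by rw [hpow]
    _ ≤ 2 := by norm_num


end Paper
end
end

section
/- Let f(z) := ∑_{j ≥ 8} e^{-j}/(z − log j). Then: (i) for every z ∈ ℂ not belonging to any disk D(log j, e^{-j}), j ≥ 8, one has |f(z)| ≤ 2; (ii) for every j ≥ 8 and every z ∈ D(log j, e^{-j}) ∖ {log j} one has |f'(z)| ≥ e^8 − 1 > 0, so f has no critical points in these disks. -/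
open Filter Topology Set Metric
open scoped ENNReal

noncomputable section

namespace Paper

/-- Riemann sphere as one-point compactification of ℂ. -/
local notation "ℂ∞" => OnePoint ℂ

end Paper

namespace Paper

/-- The poles `log j`, `j ≥ 8` (indexed by `j : ℕ` via `j ↦ log (j + 8)`). -/
def logA (j : ℕ) : ℂ := (Real.log ((j : ℝ) + 8) : ℂ)

/-- The function `f(z) = ∑_{j ≥ 8} e^{-j} / (z - log j)`. -/
def logF (z : ℂ) : ℂ := ∑' j : ℕ, (Real.exp (-((j : ℝ) + 8)) : ℂ) / (z - logA j)

end Paper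

namespace Paper

private lemma exp_ge (n : ℕ) : (2.7:ℝ)^n ≤ Real.exp (n:ℝ) := by
  have h : Real.exp ((n:ℝ)) = Real.exp 1 ^ n := by
    rw [← Real.exp_nat_mul]; norm_num
  rw [h]
  exact pow_le_pow_left₀ (by norm_num) (by linarith [Real.exp_one_gt_d9]) n

private lemma expc_le (k : ℕ) : Real.exp (-((k:ℝ)+8)) ≤ (10/27:ℝ)^(k+8) := by
  have h1 : ((k:ℝ)+8) = ((k+8:ℕ):ℝ) := by push_cast; ring
  have h2 : (27/10:ℝ)^(k+8) ≤ Real.exp ((k+8:ℕ):ℝ) := by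
    have := exp_ge (k+8); norm_num at this ⊢; exact this
  rw [h1, Real.exp_neg, show (10/27:ℝ) = (27/10:ℝ)⁻¹ by norm_num, inv_pow]
  exact inv_anti₀ (by positivity) h2

private lemma lin_le (k : ℕ) : ((k:ℝ)+8) ≤ 8*(9/8:ℝ)^k := by
  induction k with
  | zero => norm_num
  | succ n ih =>
    have h1 : (1:ℝ) ≤ (9/8:ℝ)^n := one_le_pow₀ (by norm_num)
    push_cast
    rw [pow_succ]
    push_cast at ih
    nlinarith

private lemma gbound1 (k : ℕ) :
    3*((k:ℝ)+8)*Real.exp (-((k:ℝ)+8)) ≤ (24*(10/27:ℝ)^8) * (5/12:ℝ)^k := by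
  have h1 := expc_le k
  have h2 := lin_le k
  have he := (Real.exp_pos (-((k:ℝ)+8))).le
  calc 3*((k:ℝ)+8)*Real.exp (-((k:ℝ)+8))
      ≤ (3*(8*(9/8:ℝ)^k))*((10/27:ℝ)^(k+8)) := by
        apply mul_le_mul (by nlinarith) h1 he (by positivity)
    _ = (24*(10/27:ℝ)^8) * (5/12:ℝ)^k := by
        rw [pow_add, show (5/12:ℝ)^k = (9/8:ℝ)^k * (10/27:ℝ)^k by
          rw [← mul_pow]; norm_num]
        ring

private lemma gbound2 (k : ℕ) :
    9*((k:ℝ)+8)^2*Real.exp (-((k:ℝ)+8)) ≤ (576*(10/27:ℝ)^8) * (15/32:ℝ)^k := by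
  have h1 := expc_le k
  have h2 : ((k:ℝ)+8)^2 ≤ 64*(81/64:ℝ)^k := by
    have h3 : ((k:ℝ)+8)^2 ≤ (8*(9/8:ℝ)^k)^2 :=
      pow_le_pow_left₀ (by positivity) (lin_le k) 2
    calc ((k:ℝ)+8)^2 ≤ (8*(9/8:ℝ)^k)^2 := h3
      _ = 64*(81/64:ℝ)^k := by
          rw [mul_pow, ← pow_mul, mul_comm k 2, pow_mul]; norm_num
  have he := (Real.exp_pos (-((k:ℝ)+8))).le
  calc 9*((k:ℝ)+8)^2*Real.exp (-((k:ℝ)+8))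
      ≤ (9*(64*(81/64:ℝ)^k))*((10/27:ℝ)^(k+8)) := by
        apply mul_le_mul (by nlinarith) h1 he (by positivity)
    _ = (576*(10/27:ℝ)^8) * (15/32:ℝ)^k := by
        rw [pow_add, show (15/32:ℝ)^k = (81/64:ℝ)^k * (10/27:ℝ)^k by
          rw [← mul_pow]; norm_num]
        ring

private lemma summable_g1 : Summable (fun k:ℕ => 3*((k:ℝ)+8)*Real.exp (-((k:ℝ)+8))) :=
  Summable.of_nonneg_of_le (fun k => by positivity) gbound1
    ((summable_geometric_of_lt_one (by norm_num) (by norm_num)).mul_left _)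

private lemma summable_g2 : Summable (fun k:ℕ => 9*((k:ℝ)+8)^2*Real.exp (-((k:ℝ)+8))) :=
  Summable.of_nonneg_of_le (fun k => by positivity) gbound2
    ((summable_geometric_of_lt_one (by norm_num) (by norm_num)).mul_left _)

private lemma tsum_g1 : ∑' k:ℕ, 3*((k:ℝ)+8)*Real.exp (-((k:ℝ)+8)) ≤ 1 := by
  have h := Summable.tsum_le_tsum gbound1 summable_g1
    ((summable_geometric_of_lt_one (by norm_num) (by norm_num)).mul_left _)
  rw [tsum_mul_left, tsum_geometric_of_lt_one (by norm_num) (by norm_num)] at h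
  refine h.trans ?_
  norm_num

private lemma tsum_g2 : ∑' k:ℕ, 9*((k:ℝ)+8)^2*Real.exp (-((k:ℝ)+8)) ≤ 1 := by
  have h := Summable.tsum_le_tsum gbound2 summable_g2
    ((summable_geometric_of_lt_one (by norm_num) (by norm_num)).mul_left _)
  rw [tsum_mul_left, tsum_geometric_of_lt_one (by norm_num) (by norm_num)] at h
  refine h.trans ?_
  norm_num

private lemma log_gap {p q : ℝ} (hp : 1 ≤ p) (hq : p + 1 ≤ q) :
    1/(3*p) + 1/(3*q) ≤ Real.log q - Real.log p := by
  have hp0 : 0 < p := by linarith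
  have hq0 : 0 < q := by linarith
  have h1 : Real.log p - Real.log q ≤ p/q - 1 := by
    have h := Real.log_le_sub_one_of_pos (div_pos hp0 hq0)
    rwa [Real.log_div (ne_of_gt hp0) (ne_of_gt hq0)] at h
  have h2 : 1 - p/q ≤ Real.log q - Real.log p := by linarith
  refine le_trans ?_ h2
  rw [show (1:ℝ) - p/q = (q-p)/q by field_simp,
    div_add_div _ _ (by positivity : (3:ℝ)*p ≠ 0) (by positivity : (3:ℝ)*q ≠ 0),
    div_le_div_iff₀ (by positivity) hq0]
  nlinarith [mul_nonneg (mul_nonneg (by linarith : (0:ℝ) ≤ 3*q)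
      (by linarith : (0:ℝ) ≤ q-p-1)) (by linarith : (0:ℝ) ≤ 3*p-1),
    mul_nonneg (by linarith : (0:ℝ) ≤ 3*q) (by linarith : (0:ℝ) ≤ p-1)]

private lemma logA_gap {j k : ℕ} (h : j ≠ k) :
    1/(3*((j:ℝ)+8)) + 1/(3*((k:ℝ)+8)) ≤ ‖logA j - logA k‖ := by
  have e : logA j - logA k = ((Real.log ((j:ℝ)+8) - Real.log ((k:ℝ)+8) : ℝ) : ℂ) := by
    simp [logA]
  have p1 : (0:ℝ) < 1/(3*((j:ℝ)+8)) := by positivity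
  have p2 : (0:ℝ) < 1/(3*((k:ℝ)+8)) := by positivity
  rw [e, Complex.norm_real, Real.norm_eq_abs]
  rcases lt_or_gt_of_ne h with hlt | hgt
  · have hc : (j:ℝ)+8+1 ≤ (k:ℝ)+8 := by
      have h1 : (j:ℕ)+1 ≤ k := hlt
      have h2 := (Nat.cast_le (α := ℝ)).2 h1
      push_cast at h2; linarith
    have hg := log_gap (p := (j:ℝ)+8) (q := (k:ℝ)+8)
      (by linarith [Nat.cast_nonneg (α := ℝ) j, Nat.cast_nonneg (α := ℝ) k]) hc
    rw [abs_sub_comm, abs_of_nonneg (by linarith)]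
    linarith
  · have hc : (k:ℝ)+8+1 ≤ (j:ℝ)+8 := by
      have h1 : (k:ℕ)+1 ≤ j := hgt
      have h2 := (Nat.cast_le (α := ℝ)).2 h1
      push_cast at h2; linarith
    have hg := log_gap (p := (k:ℝ)+8) (q := (j:ℝ)+8)
      (by linarith [Nat.cast_nonneg (α := ℝ) j, Nat.cast_nonneg (α := ℝ) k]) hc
    rw [abs_of_nonneg (by linarith)]
    linarith

private lemma sep {j k : ℕ} (h : k ≠ j) {z : ℂ}
    (hz : ‖z - logA j‖ < 1/(3*((j:ℝ)+8))) :
    1/(3*((k:ℝ)+8)) ≤ ‖z - logA k‖ := by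
  have tri : ‖logA j - logA k‖ ≤ ‖logA j - z‖ + ‖z - logA k‖ := by
    have := dist_triangle (logA j) z (logA k)
    rwa [dist_eq_norm, dist_eq_norm, dist_eq_norm] at this
  have hrev : ‖logA j - z‖ = ‖z - logA j‖ := norm_sub_rev _ _
  have hg := logA_gap (Ne.symm h)
  linarith

private lemma norm_term (k : ℕ) (z : ℂ) :
    ‖(Real.exp (-((k:ℝ)+8)) : ℂ)/(z - logA k)‖
      = Real.exp (-((k:ℝ)+8))/‖z - logA k‖ := by
  rw [norm_div, Complex.norm_real, Real.norm_eq_abs, Real.abs_exp]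

private lemma term_le1 {k : ℕ} {z : ℂ} (h : 1/(3*((k:ℝ)+8)) ≤ ‖z - logA k‖) :
    ‖(Real.exp (-((k:ℝ)+8)) : ℂ)/(z - logA k)‖ ≤ 3*((k:ℝ)+8)*Real.exp (-((k:ℝ)+8)) := by
  rw [norm_term]
  have hpos : (0:ℝ) < ‖z - logA k‖ := lt_of_lt_of_le (by positivity) h
  rw [div_le_iff₀ hpos]
  have key : (3*((k:ℝ)+8)*Real.exp (-((k:ℝ)+8))) * (1/(3*((k:ℝ)+8)))
      = Real.exp (-((k:ℝ)+8)) := by field_simp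
  calc Real.exp (-((k:ℝ)+8)) = _ := key.symm
    _ ≤ (3*((k:ℝ)+8)*Real.exp (-((k:ℝ)+8))) * ‖z - logA k‖ :=
        mul_le_mul_of_nonneg_left h (by positivity)

private lemma term_le2 {k : ℕ} {z : ℂ} (h : 1/(3*((k:ℝ)+8)) ≤ ‖z - logA k‖) :
    ‖(Real.exp (-((k:ℝ)+8)) : ℂ)/(z - logA k)^2‖
      ≤ 9*((k:ℝ)+8)^2*Real.exp (-((k:ℝ)+8)) := by
  rw [norm_div, norm_pow, Complex.norm_real, Real.norm_eq_abs, Real.abs_exp]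
  have hpos : (0:ℝ) < ‖z - logA k‖ := lt_of_lt_of_le (by positivity) h
  rw [div_le_iff₀ (by positivity)]
  have h2 : (1/(3*((k:ℝ)+8)))^2 ≤ ‖z - logA k‖^2 :=
    pow_le_pow_left₀ (by positivity) h 2
  have key : (9*((k:ℝ)+8)^2*Real.exp (-((k:ℝ)+8))) * ((1/(3*((k:ℝ)+8)))^2)
      = Real.exp (-((k:ℝ)+8)) := by field_simp; ring
  calc Real.exp (-((k:ℝ)+8)) = _ := key.symm
    _ ≤ (9*((k:ℝ)+8)^2*Real.exp (-((k:ℝ)+8))) * ‖z - logA k‖^2 :=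
        mul_le_mul_of_nonneg_left h2 (by positivity)

/-- Estimates from the proof of Theorem 7.4: (i) `|f(z)| ≤ 2` for `z` outside all the disks
`D(log j, e^{-j})`; (ii) `|f'(z)| ≥ e⁸ − 1 > 0` on each punctured disk
`D(log j, e^{-j}) ∖ {log j}`, so `f` has no critical points in these disks. -/
theorem infinite_order_example_estimates :
    (∀ z : ℂ, (∀ j : ℕ, z ∉ Metric.ball (logA j) (Real.exp (-((j : ℝ) + 8)))) →
        ‖logF z‖ ≤ 2)
      ∧ 0 < Real.exp 8 - 1
      ∧ (∀ j : ℕ, ∀ z ∈ Metric.ball (logA j) (Real.exp (-((j : ℝ) + 8))) \ {logA j},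
          Real.exp 8 - 1 ≤ ‖deriv logF z‖ ∧ deriv logF z ≠ 0) := by
  have h81 : (1:ℝ) < Real.exp 8 := by linarith [Real.add_one_le_exp (8:ℝ)]
  refine ⟨?_, by linarith, ?_⟩
  · -- part (i)
    intro z hz
    have hz' : ∀ k : ℕ, Real.exp (-((k:ℝ)+8)) ≤ ‖z - logA k‖ := by
      intro k
      have h := hz k
      rw [Metric.mem_ball, dist_eq_norm] at h
      exact not_lt.1 h
    show ‖∑' k : ℕ, (Real.exp (-((k:ℝ)+8)) : ℂ) / (z - logA k)‖ ≤ 2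
    by_cases hA : ∃ j0 : ℕ, ‖z - logA j0‖ < 1/(3*((j0:ℝ)+8))
    · obtain ⟨j0, hj0⟩ := hA
      have hb : ∀ k : ℕ, ‖(Real.exp (-((k:ℝ)+8)) : ℂ) / (z - logA k)‖
          ≤ (if k = j0 then (1:ℝ) else 0) + 3*((k:ℝ)+8)*Real.exp (-((k:ℝ)+8)) := by
        intro k
        by_cases hk : k = j0
        · subst hk
          rw [if_pos rfl, norm_term]
          have h1 := hz' k
          have h0 : (0:ℝ) < ‖z - logA k‖ := lt_of_lt_of_le (Real.exp_pos _) h1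
          have h2 : Real.exp (-((k:ℝ)+8))/‖z - logA k‖ ≤ 1 := by
            rw [div_le_one h0]; exact h1
          have h3 : (0:ℝ) ≤ 3*((k:ℝ)+8)*Real.exp (-((k:ℝ)+8)) := by positivity
          linarith
        · rw [if_neg hk, zero_add]
          exact term_le1 (sep hk hj0)
      have hs1 : Summable (fun k : ℕ => if k = j0 then (1:ℝ) else 0) :=
        (hasSum_ite_eq j0 (1:ℝ)).summable
      have hsum_b : Summable (fun k : ℕ =>
          (if k = j0 then (1:ℝ) else 0) + 3*((k:ℝ)+8)*Real.exp (-((k:ℝ)+8))) :=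
        hs1.add summable_g1
      have hsumT : Summable (fun k : ℕ =>
          ‖(Real.exp (-((k:ℝ)+8)) : ℂ) / (z - logA k)‖) :=
        Summable.of_nonneg_of_le (fun k => norm_nonneg _) hb hsum_b
      calc ‖∑' k : ℕ, (Real.exp (-((k:ℝ)+8)) : ℂ) / (z - logA k)‖
          ≤ ∑' k : ℕ, ‖(Real.exp (-((k:ℝ)+8)) : ℂ) / (z - logA k)‖ :=
            norm_tsum_le_tsum_norm hsumT
        _ ≤ ∑' k : ℕ, ((if k = j0 then (1:ℝ) else 0)
              + 3*((k:ℝ)+8)*Real.exp (-((k:ℝ)+8))) := Summable.tsum_le_tsum hb hsumT hsum_b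
        _ = (∑' k : ℕ, if k = j0 then (1:ℝ) else 0)
              + ∑' k : ℕ, 3*((k:ℝ)+8)*Real.exp (-((k:ℝ)+8)) :=
            Summable.tsum_add hs1 summable_g1
        _ ≤ 2 := by
            rw [(hasSum_ite_eq j0 (1:ℝ)).tsum_eq]
            linarith [tsum_g1]
    · push_neg at hA
      have hb : ∀ k : ℕ, ‖(Real.exp (-((k:ℝ)+8)) : ℂ) / (z - logA k)‖
          ≤ 3*((k:ℝ)+8)*Real.exp (-((k:ℝ)+8)) := fun k => term_le1 (hA k)
      have hsumT : Summable (fun k : ℕ =>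
          ‖(Real.exp (-((k:ℝ)+8)) : ℂ) / (z - logA k)‖) :=
        Summable.of_nonneg_of_le (fun k => norm_nonneg _) hb summable_g1
      calc ‖∑' k : ℕ, (Real.exp (-((k:ℝ)+8)) : ℂ) / (z - logA k)‖
          ≤ ∑' k : ℕ, ‖(Real.exp (-((k:ℝ)+8)) : ℂ) / (z - logA k)‖ :=
            norm_tsum_le_tsum_norm hsumT
        _ ≤ ∑' k : ℕ, 3*((k:ℝ)+8)*Real.exp (-((k:ℝ)+8)) :=
            Summable.tsum_le_tsum hb hsumT summable_g1
        _ ≤ 2 := by linarith [tsum_g1]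
  · -- part (ii)
    intro j z hz
    obtain ⟨hzball, hzO⟩ := hz
    have hzne : z ≠ logA j := by simpa using hzO
    have hzlt : ‖z - logA j‖ < Real.exp (-((j:ℝ)+8)) := by
      rw [← dist_eq_norm]; exact Metric.mem_ball.1 hzball
    have hcr : Real.exp (-((j:ℝ)+8)) ≤ 1/(3*((j:ℝ)+8)) := by
      have h3 : (2824:ℝ) ≤ Real.exp 8 := by
        have h := exp_ge 8
        norm_num at h
        linarith
      have h4 : (j:ℝ)+1 ≤ Real.exp (j:ℝ) := Real.add_one_le_exp _
      have h6 : (2824:ℝ)*((j:ℝ)+1) ≤ Real.exp 8 * Real.exp (j:ℝ) :=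
        mul_le_mul h3 h4 (by positivity) (Real.exp_pos 8).le
      have h5 : 3*((j:ℝ)+8) ≤ Real.exp ((j:ℝ)+8) := by
        rw [show ((j:ℝ)+8) = 8+(j:ℝ) by ring, Real.exp_add]
        nlinarith [Nat.cast_nonneg (α := ℝ) j]
      rw [Real.exp_neg, show (1:ℝ)/(3*((j:ℝ)+8)) = (3*((j:ℝ)+8))⁻¹ by rw [one_div]]
      exact inv_anti₀ (by positivity) h5
    set r : ℝ := 1/(3*((j:ℝ)+8)) with hrdef
    have hr : 0 < r := by positivity
    have hzs : z ∈ Metric.ball (logA j) r :=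
      Metric.mem_ball.2 (by rw [dist_eq_norm]; linarith)
    set g : ℕ → ℂ → ℂ := fun k w =>
      if k = j then 0 else (Real.exp (-((k:ℝ)+8)) : ℂ)/(w - logA k) with hgdef
    set g' : ℕ → ℂ → ℂ := fun k w =>
      if k = j then 0 else -((Real.exp (-((k:ℝ)+8)) : ℂ)/((w - logA k)^2)) with hg'def
    have hsepb : ∀ k : ℕ, k ≠ j → ∀ w ∈ Metric.ball (logA j) r,
        1/(3*((k:ℝ)+8)) ≤ ‖w - logA k‖ := by
      intro k hk w hw
      exact sep hk (by rw [← dist_eq_norm]; exact Metric.mem_ball.1 hw)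
    have hgsum : ∀ w ∈ Metric.ball (logA j) r, Summable (fun k => g k w) := by
      intro w hw
      apply Summable.of_norm
      apply Summable.of_nonneg_of_le (fun k => norm_nonneg _) ?_ summable_g1
      intro k
      by_cases hk : k = j
      · simp only [hgdef, if_pos hk, norm_zero]; positivity
      · simp only [hgdef, if_neg hk]
        exact term_le1 (hsepb k hk w hw)
    have hderiv : ∀ (k : ℕ) (w : ℂ), w ∈ Metric.ball (logA j) r →
        HasDerivAt (g k) (g' k w) w := by
      intro k w hw
      by_cases hk : k = j
      · simp only [hgdef, hg'def, if_pos hk]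
        exact hasDerivAt_const w 0
      · simp only [hgdef, hg'def, if_neg hk]
        have hne : w - logA k ≠ 0 := by
          intro h0
          have hb := hsepb k hk w hw
          rw [h0, norm_zero] at hb
          have hp : (0:ℝ) < 1/(3*((k:ℝ)+8)) := by positivity
          linarith
        have h1 : HasDerivAt (fun w : ℂ => w - logA k) 1 w := (hasDerivAt_id w).sub_const _
        have h2 := h1.inv hne
        have h3 := h2.const_mul ((Real.exp (-((k:ℝ)+8)) : ℂ))
        simp only [div_eq_mul_inv]
        refine h3.congr_deriv ?_
        ring
    have hbound : ∀ (k : ℕ) (w : ℂ), w ∈ Metric.ball (logA j) r →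
        ‖g' k w‖ ≤ 9*((k:ℝ)+8)^2*Real.exp (-((k:ℝ)+8)) := by
      intro k w hw
      by_cases hk : k = j
      · simp only [hg'def, if_pos hk, norm_zero]; positivity
      · simp only [hg'def, if_neg hk, norm_neg]
        exact term_le2 (hsepb k hk w hw)
    have hg0 : Summable (fun k => g k (logA j)) :=
      hgsum (logA j) (Metric.mem_ball_self hr)
    have hDg : HasDerivAt (fun w => ∑' k, g k w) (∑' k, g' k z) z :=
      hasDerivAt_tsum_of_isPreconnected summable_g2 Metric.isOpen_ball
        (convex_ball (logA j) r).isPreconnected hderiv hbound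
        (Metric.mem_ball_self hr) hg0 hzs
    have hneJ : z - logA j ≠ 0 := sub_ne_zero.2 hzne
    have hD1 : HasDerivAt (fun w : ℂ => (Real.exp (-((j:ℝ)+8)) : ℂ)/(w - logA j))
        (-((Real.exp (-((j:ℝ)+8)) : ℂ)/((z - logA j)^2))) z := by
      have h1 : HasDerivAt (fun w : ℂ => w - logA j) 1 z := (hasDerivAt_id z).sub_const _
      have h2 := h1.inv hneJ
      have h3 := h2.const_mul ((Real.exp (-((j:ℝ)+8)) : ℂ))
      simp only [div_eq_mul_inv]
      refine h3.congr_deriv ?_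
      ring
    have hDF : HasDerivAt
        (fun w => (Real.exp (-((j:ℝ)+8)) : ℂ)/(w - logA j) + ∑' k, g k w)
        (-((Real.exp (-((j:ℝ)+8)) : ℂ)/((z - logA j)^2)) + ∑' k, g' k z) z := hD1.add hDg
    have heq : logF =ᶠ[𝓝 z]
        fun w => (Real.exp (-((j:ℝ)+8)) : ℂ)/(w - logA j) + ∑' k, g k w := by
      have hopen : IsOpen (Metric.ball (logA j) r \ {logA j}) :=
        Metric.isOpen_ball.sdiff isClosed_singleton
      refine Filter.eventuallyEq_of_mem (hopen.mem_nhds ⟨hzs, hzO⟩) ?_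
      intro w hw
      obtain ⟨hws, hwO⟩ := hw
      have hterm : ∀ k : ℕ, (Real.exp (-((k:ℝ)+8)) : ℂ)/(w - logA k)
          = (if k = j then (Real.exp (-((j:ℝ)+8)) : ℂ)/(w - logA j) else 0) + g k w := by
        intro k
        by_cases hk : k = j
        · subst hk; simp [hgdef]
        · simp [hgdef, if_neg hk]
      show logF w = (Real.exp (-((j:ℝ)+8)) : ℂ)/(w - logA j) + ∑' k, g k w
      unfold logF
      calc (∑' k : ℕ, (Real.exp (-((k:ℝ)+8)) : ℂ)/(w - logA k))
          = ∑' k : ℕ, ((if k = j then (Real.exp (-((j:ℝ)+8)) : ℂ)/(w - logA j) else 0)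
              + g k w) := tsum_congr hterm
        _ = (∑' k : ℕ, if k = j then (Real.exp (-((j:ℝ)+8)) : ℂ)/(w - logA j) else 0)
              + ∑' k, g k w :=
            Summable.tsum_add (hasSum_ite_eq j _).summable (hgsum w hws)
        _ = (Real.exp (-((j:ℝ)+8)) : ℂ)/(w - logA j) + ∑' k, g k w := by
            rw [(hasSum_ite_eq j ((Real.exp (-((j:ℝ)+8)) : ℂ)/(w - logA j))).tsum_eq]
    have hder : deriv logF z
        = -((Real.exp (-((j:ℝ)+8)) : ℂ)/((z - logA j)^2)) + ∑' k, g' k z :=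
      heq.deriv_eq.trans hDF.deriv
    have hn1 : Real.exp 8 ≤ ‖-((Real.exp (-((j:ℝ)+8)) : ℂ)/((z - logA j)^2))‖ := by
      rw [norm_neg, norm_div, norm_pow, Complex.norm_real, Real.norm_eq_abs, Real.abs_exp]
      have h0 : (0:ℝ) < ‖z - logA j‖ := norm_pos_iff.2 hneJ
      have hse : Real.exp 8 ≤ Real.exp ((j:ℝ)+8) := by
        apply Real.exp_le_exp.2; linarith [Nat.cast_nonneg (α := ℝ) j]
      have hkey : Real.exp ((j:ℝ)+8) ≤ Real.exp (-((j:ℝ)+8))/‖z - logA j‖^2 := by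
        rw [le_div_iff₀ (by positivity)]
        have h2 : ‖z - logA j‖^2 ≤ (Real.exp (-((j:ℝ)+8)))^2 :=
          pow_le_pow_left₀ h0.le hzlt.le 2
        calc Real.exp ((j:ℝ)+8) * ‖z - logA j‖^2
            ≤ Real.exp ((j:ℝ)+8) * (Real.exp (-((j:ℝ)+8)))^2 :=
              mul_le_mul_of_nonneg_left h2 (Real.exp_pos _).le
          _ = Real.exp (-((j:ℝ)+8)) := by
              rw [pow_two, ← mul_assoc, ← Real.exp_add, add_neg_cancel,
                Real.exp_zero, one_mul]
      linarith
    have hn2 : ‖∑' k, g' k z‖ ≤ 1 := by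
      have hsn : Summable (fun k => ‖g' k z‖) :=
        Summable.of_nonneg_of_le (fun k => norm_nonneg _)
          (fun k => hbound k z hzs) summable_g2
      calc ‖∑' k, g' k z‖ ≤ ∑' k, ‖g' k z‖ := norm_tsum_le_tsum_norm hsn
        _ ≤ ∑' k : ℕ, 9*((k:ℝ)+8)^2*Real.exp (-((k:ℝ)+8)) :=
            Summable.tsum_le_tsum (fun k => hbound k z hzs) hsn summable_g2
        _ ≤ 1 := tsum_g2
    have hge : Real.exp 8 - 1 ≤ ‖deriv logF z‖ := by
      rw [hder]
      have h3 := norm_add_le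
        (-((Real.exp (-((j:ℝ)+8)) : ℂ)/((z - logA j)^2)) + ∑' k, g' k z)
        (-(∑' k, g' k z))
      simp only [add_neg_cancel_right, norm_neg] at h3
      rw [norm_neg] at hn1
      linarith
    exact ⟨hge, fun h0 => by rw [h0, norm_zero] at hge; linarith⟩


end Paper
end
end

section
/- Let (a_j)_{j≥1} be a sequence in ℂ ∖ {0} with |a_j| → ∞, let (b_j)_{j≥1} be nonzero complex numbers, and let m_j be positive integers with m_j ≤ M := limsup_j m_j < ∞ (so that infinitely many j satisfy m_j = M). Let δ be the critical exponent of ∑_j (|b_j|/|a_j|^{1+1/M})^t. Then there exists α ∈ ℝ such that the open cone C := exp({z ∈ ℂ : α < Im z < α + 3π/2}) satisfies: ∑_{j : a_j ∈ C} (|b_j|/|a_j|^{1+1/M})^t = ∞ for every t with 0 ≤ t < δ, and the set {j : a_j ∈ C and m_j = M} is infinite. -/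
open Filter Topology Set Metric
open scoped ENNReal

noncomputable section

namespace Paper

/-- Riemann sphere as one-point compactification of ℂ. -/
local notation "ℂ∞" => OnePoint ℂ

end Paper

namespace Paper

/-- The cone `C(α₁, α₂) = exp {z : α₁ < Im z < α₂}`. -/
def cone (α₁ α₂ : ℝ) : Set ℂ :=
  (fun z : ℂ => Complex.exp z) '' {z : ℂ | α₁ < z.im ∧ z.im < α₂}

lemma im_aux (z : ℂ) (n : ℤ) :
    (Complex.log z + n * (2 * Real.pi * Complex.I)).im = z.arg + 2 * Real.pi * n := by
  simp [Complex.log_im, Complex.add_im, Complex.mul_im, Complex.mul_re]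
  ring

lemma mem_cone_iff {z : ℂ} (hz : z ≠ 0) (α β : ℝ) :
    z ∈ cone α β ↔ ∃ n : ℤ, α < z.arg + 2 * Real.pi * n ∧ z.arg + 2 * Real.pi * n < β := by
  constructor
  · rintro ⟨w, ⟨h1, h2⟩, hw⟩
    simp only at hw
    have h3 : Complex.exp (Complex.log z) = Complex.exp w := by
      rw [Complex.exp_log hz, hw]
    rw [Complex.exp_eq_exp_iff_exists_int] at h3
    obtain ⟨n, hn⟩ := h3
    have him : z.arg = w.im + 2 * Real.pi * n := by
      have h5 := congrArg Complex.im hn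
      rw [Complex.log_im] at h5
      rw [h5]
      simp [Complex.add_im, Complex.mul_im, Complex.mul_re]
      ring
    refine ⟨-n, ?_, ?_⟩ <;> · rw [him]; push_cast; linarith
  · rintro ⟨n, h1, h2⟩
    refine ⟨Complex.log z + n * (2 * Real.pi * Complex.I), ⟨?_, ?_⟩, ?_⟩
    · exact lt_of_lt_of_eq h1 (im_aux z n).symm
    · exact lt_of_eq_of_lt (im_aux z n) h2
    · simp only
      rw [Complex.exp_add, Complex.exp_int_mul_two_pi_mul_I, mul_one, Complex.exp_log hz]

lemma sum_upgrade {ι : Type*} {c : ι → ℝ} (hc : ∀ j, 0 < c j) {t t' : ℝ}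
    (h0 : 0 ≤ t) (htt : t ≤ t') (hs : Summable fun j => c j ^ t) :
    Summable fun j => c j ^ t' := by
  rcases eq_or_lt_of_le h0 with h0' | h0'
  · have h1 : ∀ j, c j ^ t = (1 : ℝ) := fun j => by rw [← h0', Real.rpow_zero]
    rw [funext h1] at hs
    have : Finite ι := Finite.of_summable_const one_pos hs
    exact Summable.of_finite
  · have hev : ∀ᶠ j in cofinite, c j ^ t < 1 :=
      hs.tendsto_cofinite_zero.eventually_lt_const one_pos
    refine Summable.of_norm_bounded_eventually hs ?_
    filter_upwards [hev] with j hj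
    have hle1 : c j ≤ 1 := by
      by_contra h
      push_neg at h
      have : 1 < c j ^ t := (Real.one_lt_rpow_iff_of_pos (hc j)).mpr (Or.inl ⟨h, h0'⟩)
      linarith
    rw [Real.norm_eq_abs, abs_of_nonneg (Real.rpow_nonneg (hc j).le _)]
    exact Real.rpow_le_rpow_of_exponent_ge (hc j) hle1 htt

lemma cover_lemma (z : ℂ) (hz : z ≠ 0) :
    ∃ s : Finset ℕ, s.card = 3 ∧ s ⊆ Finset.range 5 ∧ ∀ k ∈ s, z ∈
      cone (-Real.pi + 2 * Real.pi * k / 5)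
        (-Real.pi + 2 * Real.pi * k / 5 + 3 * Real.pi / 2) := by
  classical
  have hπ := Real.pi_pos
  have hθ1 : -Real.pi < z.arg := Complex.neg_pi_lt_arg z
  have hθ2 : z.arg ≤ Real.pi := Complex.arg_le_pi z
  set θ := z.arg with hθ
  have hmem : ∀ (k : ℕ) (n : ℤ),
      -Real.pi + 2 * Real.pi * k / 5 < θ + 2 * Real.pi * n →
      θ + 2 * Real.pi * n < -Real.pi + 2 * Real.pi * k / 5 + 3 * Real.pi / 2 →
      z ∈ cone (-Real.pi + 2 * Real.pi * k / 5)
        (-Real.pi + 2 * Real.pi * k / 5 + 3 * Real.pi / 2) := by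
    intro k n h1 h2
    exact (mem_cone_iff hz _ _).mpr ⟨n, h1, h2⟩
  rcases le_or_gt θ (-(3*Real.pi/5)) with h | h
  · refine ⟨{0, 3, 4}, by decide, by decide, ?_⟩
    intro k hk
    simp only [Finset.mem_insert, Finset.mem_singleton] at hk
    rcases hk with rfl | rfl | rfl
    · exact hmem 0 0 (by push_cast; linarith) (by push_cast; linarith)
    · exact hmem 3 1 (by push_cast; linarith) (by push_cast; linarith)
    · exact hmem 4 1 (by push_cast; linarith) (by push_cast; linarith)
  rcases le_or_gt θ (-(Real.pi/5)) with h' | h'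
  · refine ⟨{0, 1, 4}, by decide, by decide, ?_⟩
    intro k hk
    simp only [Finset.mem_insert, Finset.mem_singleton] at hk
    rcases hk with rfl | rfl | rfl
    · exact hmem 0 0 (by push_cast; linarith) (by push_cast; linarith)
    · exact hmem 1 0 (by push_cast; linarith) (by push_cast; linarith)
    · exact hmem 4 1 (by push_cast; linarith) (by push_cast; linarith)
  rcases le_or_gt θ (Real.pi/5) with h'' | h''
  · refine ⟨{0, 1, 2}, by decide, by decide, ?_⟩
    intro k hk
    simp only [Finset.mem_insert, Finset.mem_singleton] at hk
    rcases hk with rfl | rfl | rfl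
    · exact hmem 0 0 (by push_cast; linarith) (by push_cast; linarith)
    · exact hmem 1 0 (by push_cast; linarith) (by push_cast; linarith)
    · exact hmem 2 0 (by push_cast; linarith) (by push_cast; linarith)
  rcases le_or_gt θ (3*Real.pi/5) with h''' | h'''
  · refine ⟨{1, 2, 3}, by decide, by decide, ?_⟩
    intro k hk
    simp only [Finset.mem_insert, Finset.mem_singleton] at hk
    rcases hk with rfl | rfl | rfl
    · exact hmem 1 0 (by push_cast; linarith) (by push_cast; linarith)
    · exact hmem 2 0 (by push_cast; linarith) (by push_cast; linarith)
    · exact hmem 3 0 (by push_cast; linarith) (by push_cast; linarith)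
  · refine ⟨{2, 3, 4}, by decide, by decide, ?_⟩
    intro k hk
    simp only [Finset.mem_insert, Finset.mem_singleton] at hk
    rcases hk with rfl | rfl | rfl
    · exact hmem 2 0 (by push_cast; linarith) (by push_cast; linarith)
    · exact hmem 3 0 (by push_cast; linarith) (by push_cast; linarith)
    · exact hmem 4 0 (by push_cast; linarith) (by push_cast; linarith)

/-- **Lemma 5.1**: there is a cone of opening `3π/2` in which the series
`∑_{a_j ∈ C} (|b_j|/|a_j|^{1+1/M})^t` diverges for every `0 ≤ t < δ` and which contains
infinitely many poles of maximal multiplicity `M`. -/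
theorem cone_lemma (a : ℕ → ℂ) (b : ℕ → ℂ) (m : ℕ → ℕ) (M : ℕ)
    (ha0 : ∀ j, a j ≠ 0)
    (hacc : Tendsto (fun j : ℕ => ‖a j‖) atTop atTop)
    (hb : ∀ j, b j ≠ 0)
    (hm : ∀ j, 1 ≤ m j)
    (hle : ∀ j, m j ≤ M)
    (hattain : {j : ℕ | m j = M}.Infinite) :
    ∃ α : ℝ,
      (∀ t : ℝ, 0 ≤ t →
        ENNReal.ofReal t < critExp (fun j : ℕ => ‖b j‖ / ‖a j‖ ^ (1 + 1 / (M : ℝ))) →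
        ¬ Summable (fun j : {j : ℕ // a j ∈ cone α (α + 3 * Real.pi / 2)} =>
            (‖b j.1‖ / ‖a j.1‖ ^ (1 + 1 / (M : ℝ))) ^ t))
      ∧ {j : ℕ | a j ∈ cone α (α + 3 * Real.pi / 2) ∧ m j = M}.Infinite := by
  classical
  have hπ := Real.pi_pos
  set c : ℕ → ℝ := fun j => ‖b j‖ / ‖a j‖ ^ (1 + 1 / (M : ℝ)) with hcdef
  set δ := critExp c with hδdef
  have hcpos : ∀ j, 0 < c j := fun j =>
    div_pos (norm_pos_iff.mpr (hb j)) (Real.rpow_pos_of_pos (norm_pos_iff.mpr (ha0 j)) _)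
  set A : ℕ → ℝ := fun k => -Real.pi + 2 * Real.pi * k / 5 with hAdef
  set Co : ℕ → Set ℂ := fun k => cone (A k) (A k + 3 * Real.pi / 2) with hCodef
  have hhit : ∀ T : Finset ℕ, T ⊆ Finset.range 5 → 3 ≤ T.card →
      ∀ j : ℕ, ∃ k ∈ T, a j ∈ Co k := by
    intro T hT5 hT3 j
    obtain ⟨s, hs3, hs5, hsmem⟩ := cover_lemma (a j) (ha0 j)
    have hcard : 0 < (s ∩ T).card := by
      have h1 : (s ∪ T).card ≤ 5 := by
        have := Finset.card_le_card (Finset.union_subset hs5 hT5)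
        simpa using this
      have h2 := Finset.card_union_add_card_inter s T
      omega
    obtain ⟨k, hk⟩ := Finset.card_pos.mp hcard
    exact ⟨k, (Finset.mem_inter.mp hk).2, hsmem k (Finset.mem_inter.mp hk).1⟩
  set Bad : Finset ℕ := (Finset.range 5).filter (fun k => ∃ t : ℝ, 0 ≤ t ∧
    ENNReal.ofReal t < δ ∧
    Summable (fun j : {j : ℕ // a j ∈ Co k} => c j.1 ^ t)) with hBadDef
  set Dad : Finset ℕ := (Finset.range 5).filter
    (fun k => ¬ ({j : ℕ | a j ∈ Co k ∧ m j = M}.Infinite)) with hDadDef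
  have hBadcard : Bad.card ≤ 2 := by
    by_contra hB
    push_neg at hB
    have hB3 : 3 ≤ Bad.card := hB
    have hch : ∀ k ∈ Bad, ∃ t : ℝ, 0 ≤ t ∧ ENNReal.ofReal t < δ ∧
        Summable (fun j : {j : ℕ // a j ∈ Co k} => c j.1 ^ t) :=
      fun k hk => (Finset.mem_filter.mp hk).2
    choose! tt h0 hlt hsum using hch
    have hne : Bad.Nonempty := Finset.card_pos.mp (by omega)
    obtain ⟨k₀, hk₀mem, hk₀⟩ := Finset.exists_mem_eq_sup' hne tt
    set ts := Bad.sup' hne tt with hts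
    have h0s : 0 ≤ ts := hk₀ ▸ h0 k₀ hk₀mem
    have hlts : ENNReal.ofReal ts < δ := hk₀ ▸ hlt k₀ hk₀mem
    have hsums : ∀ k ∈ Bad,
        Summable (fun j : {j : ℕ // a j ∈ Co k} => c j.1 ^ ts) := by
      intro k hk
      exact sum_upgrade (fun j => hcpos _) (h0 k hk) (Finset.le_sup' tt hk) (hsum k hk)
    have hind : ∀ k ∈ Bad,
        Summable (Set.indicator {j : ℕ | a j ∈ Co k} (fun j => c j ^ ts)) := by
      intro k hk
      exact summable_subtype_iff_indicator.mp (hsums k hk)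
    have hgsum : Summable (fun j : ℕ =>
        ∑ k ∈ Bad, Set.indicator {j' : ℕ | a j' ∈ Co k} (fun j' => c j' ^ ts) j) :=
      summable_sum hind
    have hbound : ∀ j : ℕ, c j ^ ts ≤
        ∑ k ∈ Bad, Set.indicator {j' : ℕ | a j' ∈ Co k} (fun j' => c j' ^ ts) j := by
      intro j
      obtain ⟨k, hkB, hjk⟩ := hhit Bad (Finset.filter_subset _ _) hB3 j
      have hone : Set.indicator {j' : ℕ | a j' ∈ Co k} (fun j' => c j' ^ ts) j
          = c j ^ ts := Set.indicator_of_mem (show j ∈ {j' : ℕ | a j' ∈ Co k} from hjk) _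
      rw [← hone]
      exact Finset.single_le_sum
        (f := fun k' : ℕ => Set.indicator {j' : ℕ | a j' ∈ Co k'} (fun j' => c j' ^ ts) j)
        (fun i _ => Set.indicator_nonneg (fun x _ => Real.rpow_nonneg (hcpos x).le _) _) hkB
    have hsummable : Summable (fun j : ℕ => c j ^ ts) :=
      Summable.of_nonneg_of_le (fun j => Real.rpow_nonneg (hcpos j).le _) hbound hgsum
    have hout : δ ≤ ENNReal.ofReal ts := sInf_le ⟨ts, ⟨h0s, hsummable⟩, rfl⟩
    exact absurd hlts (not_lt.mpr hout)
  have hDadcard : Dad.card ≤ 2 := by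
    by_contra hD
    push_neg at hD
    have hD3 : 3 ≤ Dad.card := hD
    have hsub : {j : ℕ | m j = M} ⊆ ⋃ k ∈ Dad, {j : ℕ | a j ∈ Co k ∧ m j = M} := by
      intro j hj
      obtain ⟨k, hkD, hjk⟩ := hhit Dad (Finset.filter_subset _ _) hD3 j
      exact Set.mem_biUnion hkD ⟨hjk, hj⟩
    have hfin : (⋃ k ∈ Dad, {j : ℕ | a j ∈ Co k ∧ m j = M}).Finite := by
      refine Set.Finite.biUnion Dad.finite_toSet (fun k hk => ?_)
      exact Set.not_infinite.mp (Finset.mem_filter.mp hk).2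
    exact hattain (hfin.subset hsub)
  have hnot : ¬ (Finset.range 5 ⊆ Bad ∪ Dad) := by
    intro hsub
    have h1 := Finset.card_le_card hsub
    have h2 := Finset.card_union_le Bad Dad
    simp only [Finset.card_range] at h1
    omega
  obtain ⟨k, hk5, hkn⟩ := Finset.not_subset.mp hnot
  have hkB : k ∉ Bad := fun h => hkn (Finset.mem_union_left _ h)
  have hkD : k ∉ Dad := fun h => hkn (Finset.mem_union_right _ h)
  refine ⟨A k, ?_, ?_⟩
  · intro t ht0 htδ hsummable
    apply hkB
    rw [hBadDef, Finset.mem_filter]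
    exact ⟨hk5, t, ht0, htδ, hsummable⟩
  · by_contra hinf
    apply hkD
    rw [hDadDef, Finset.mem_filter]
    exact ⟨hk5, hinf⟩


end Paper
end
end
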